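/- arXiv:1703.07663 — 5 statements merged into one kernel-verified Lean document; each statement's English description precedes it below -/
import Mathlib

section
/- Let p be a prime with p ∉ {2, 3} and let e ≥ 1 be an integer. Then the number of residue classes x in ℤ/p^eℤ satisfying x² + x + 1 = 0 equals 1 + (−3/p), where (−3/p) denotes the Legendre symbol of −3 modulo p. -/
lemma neg_three_ne_zero' {p : ℕ} (hp : p.Prime) (hp3 : p ≠ 3) : (-3 : ZMod p) ≠ 0 := by
  intro h
  have h3 : ((3 : ℕ) : ZMod p) = 0 := by exact_mod_cast neg_eq_zero.mp h
  rw [ZMod.natCast_eq_zero_iff] at h3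
  rcases (Nat.prime_dvd_prime_iff_eq hp Nat.prime_three).mp h3 with rfl
  exact hp3 rfl

lemma isUnit_of_map_ne_zero' {p : ℕ} (hp : p.Prime) {k : ℕ} (hk : k ≠ 0) (b : ZMod (p ^ k))
    (hb : ZMod.castHom (dvd_pow_self p hk) (ZMod p) b ≠ 0) : IsUnit b := by
  haveI : NeZero (p ^ k) := ⟨pow_ne_zero _ hp.ne_zero⟩
  have hbv : ((b.val : ℕ) : ZMod (p ^ k)) = b := ZMod.natCast_zmod_val b
  rw [← hbv, ZMod.isUnit_iff_coprime]
  have hnd : ¬ p ∣ b.val := by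
    intro hdvd
    apply hb
    have h0 : ((b.val : ℕ) : ZMod p) = 0 := (ZMod.natCast_eq_zero_iff _ _).mpr hdvd
    rw [ZMod.castHom_apply, ← hbv]
    simpa using h0
  exact Nat.Coprime.pow_right _ (((Nat.Prime.coprime_iff_not_dvd hp).mpr hnd).symm)

lemma step_case (p : ℕ) (hp : p.Prime) (hp3 : p ≠ 3) (e : ℕ) (he : 1 ≤ e) :
    ({x : ZMod (p ^ (e+1)) | x ^ 2 + x + 1 = 0}).ncard
      = ({x : ZMod (p ^ e) | x ^ 2 + x + 1 = 0}).ncard := by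
  haveI : Fact p.Prime := ⟨hp⟩
  haveI : NeZero (p ^ (e+1)) := ⟨pow_ne_zero _ hp.ne_zero⟩
  haveI : NeZero (p ^ e) := ⟨pow_ne_zero _ hp.ne_zero⟩
  set R := ZMod (p ^ (e+1)) with hR
  have hdvd : p ^ e ∣ p ^ (e+1) := pow_dvd_pow p (Nat.le_succ e)
  set φ : ZMod (p ^ (e+1)) →+* ZMod (p ^ e) := ZMod.castHom hdvd (ZMod (p ^ e)) with hφ
  have hk1 : (e+1) ≠ 0 := Nat.succ_ne_zero e
  set ψ : ZMod (p ^ (e+1)) →+* ZMod p := ZMod.castHom (dvd_pow_self p hk1) (ZMod p) with hψ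
  have hpe2 : ((p : R) ^ e) * ((p : R) ^ e) = 0 := by
    have h0 : ((p ^ (e + e) : ℕ) : R) = 0 := by
      rw [ZMod.natCast_eq_zero_iff]
      exact pow_dvd_pow p (by omega)
    push_cast at h0
    rw [← pow_add]
    exact h0
  have hψpe : ψ ((p : R) ^ e) = 0 := by
    rw [map_pow, map_natCast]
    rcases Nat.exists_eq_add_of_le he with ⟨f, rfl⟩
    rw [pow_add, pow_one]
    simp [ZMod.natCast_self]
  have hker : ∀ z : R, φ z = 0 → ∃ c : R, z = (p : R) ^ e * c := by
    intro z hz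
    have hz' : ((z.val : ℕ) : ZMod (p ^ e)) = 0 := by
      rw [ZMod.natCast_val]
      rw [hφ, ZMod.castHom_apply] at hz
      exact hz
    rw [ZMod.natCast_eq_zero_iff] at hz'
    rcases hz' with ⟨m, hm⟩
    refine ⟨(m : R), ?_⟩
    have hzv : ((z.val : ℕ) : R) = z := ZMod.natCast_zmod_val z
    rw [← hzv, hm]
    rw [Nat.cast_mul, Nat.cast_pow]
  have hunit : ∀ x : R, ψ (x ^ 2 + x + 1) = 0 → IsUnit (2 * x + 1) := by
    intro x hx
    apply isUnit_of_map_ne_zero' hp hk1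
    intro h0
    rw [← hψ] at h0
    have hsq : (ψ (2 * x + 1)) ^ 2 = -3 := by
      have hexp : (2 * x + 1) ^ 2 = 4 * (x ^ 2 + x + 1) - 3 := by ring
      rw [← map_pow, hexp]
      simp [map_sub, map_mul, hx, map_ofNat]
    rw [h0] at hsq
    exact neg_three_ne_zero' hp hp3 (by simpa using hsq.symm)
  set S : Set R := {x : R | x ^ 2 + x + 1 = 0} with hS
  set T : Set (ZMod (p ^ e)) := {x : ZMod (p ^ e) | x ^ 2 + x + 1 = 0} with hT
  have hbij : Set.BijOn φ S T := by
    refine ⟨?_, ?_, ?_⟩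
    · intro x hx
      simp only [hS, Set.mem_setOf_eq] at hx
      simp only [hT, Set.mem_setOf_eq]
      have := congrArg φ hx
      simpa using this
    · intro x hx y hy hxy
      simp only [hS, Set.mem_setOf_eq] at hx hy
      have hd : φ (x - y) = 0 := by rw [map_sub, hxy, sub_self]
      rcases hker _ hd with ⟨c, hc⟩
      have hux : IsUnit (2 * x + 1) := by
        apply hunit
        rw [hx, map_zero]
      have hzero : (x - y) * (x - y) = 0 := by
        rw [hc, show (p : R) ^ e * c * ((p:R) ^ e * c) = ((p:R)^e * (p:R)^e) * (c * c) by ring,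
          hpe2, zero_mul]
      have hmain : (x - y) * (2 * x + 1) = 0 * (2 * x + 1) := by
        rw [zero_mul]
        have hx' : x ^ 2 + x + 1 = 0 := hx
        have hy' : y ^ 2 + y + 1 = 0 := hy
        linear_combination hx' - hy' + hzero
      exact sub_eq_zero.mp (hux.mul_right_cancel hmain)
    · intro y hy
      simp only [hT, Set.mem_setOf_eq] at hy
      set x₀ : R := ((y.val : ℕ) : R) with hx₀
      have hφx₀ : φ x₀ = y := by
        rw [hx₀, map_natCast, ZMod.natCast_zmod_val]
      have hφf : φ (x₀ ^ 2 + x₀ + 1) = 0 := by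
        have h1 : φ (x₀ ^ 2 + x₀ + 1) = y ^ 2 + y + 1 := by
          rw [map_add, map_add, map_pow, map_one, hφx₀]
        rw [h1, hy]
      rcases hker _ hφf with ⟨c, hc⟩
      have hψf : ψ (x₀ ^ 2 + x₀ + 1) = 0 := by
        rw [hc, map_mul, hψpe, zero_mul]
      rcases hunit _ hψf with ⟨u, hu⟩
      have huv : (u : R) * ((u⁻¹ : Rˣ) : R) = 1 := u.mul_inv
      refine ⟨x₀ - (p : R) ^ e * c * ((u⁻¹ : Rˣ) : R), ?_, ?_⟩
      · simp only [hS, Set.mem_setOf_eq]; show _ ^ 2 + _ + 1 = 0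
        linear_combination hc + ((p:R)^e * c * ((u⁻¹ : Rˣ) : R)) * hu
          - ((p:R)^e * c) * huv + (c^2 * ((u⁻¹ : Rˣ) : R)^2) * hpe2
      · have h0 : φ ((p : R) ^ e * c * ((u⁻¹ : Rˣ) : R)) = 0 := by
          have hp0 : ((p : ZMod (p ^ e)))^e = 0 := by
            rw [← Nat.cast_pow, ZMod.natCast_self]
          rw [map_mul, map_mul, map_pow, map_natCast, hp0, zero_mul, zero_mul]
        rw [map_sub, hφx₀, h0, sub_zero]
  rw [← hbij.image_eq, Set.ncard_image_of_injOn hbij.injOn]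

lemma base_case (p : ℕ) (hp : p.Prime) (hp2 : p ≠ 2) (hp3 : p ≠ 3) :
    ({x : ZMod p | x ^ 2 + x + 1 = 0}.ncard : ℤ) = 1 + @legendreSym p ⟨hp⟩ (-3) := by
  haveI : Fact p.Prime := ⟨hp⟩
  have h2 : (2 : ZMod p) ≠ 0 := by
    intro h
    have : ((2 : ℕ) : ZMod p) = 0 := by exact_mod_cast h
    rw [ZMod.natCast_eq_zero_iff] at this
    exact hp2 ((Nat.prime_dvd_prime_iff_eq hp Nat.prime_two).mp this)
  set S : Set (ZMod p) := {x | x ^ 2 + x + 1 = 0} with hS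
  set T : Set (ZMod p) := {x : ZMod p | x ^ 2 = ((-3 : ℤ) : ZMod p)} with hT
  have hbij : Set.BijOn (fun x : ZMod p => 2 * x + 1) S T := by
    refine ⟨?_, ?_, ?_⟩
    · intro x hx
      simp only [hS, Set.mem_setOf_eq] at hx
      simp only [hT, Set.mem_setOf_eq]
      push_cast
      linear_combination 4 * hx
    · intro x hx y hy hxy
      simp only at hxy
      exact mul_left_cancel₀ h2 (add_right_cancel hxy)
    · intro y hy
      have hc : (2 : ZMod p) * 2⁻¹ = 1 := mul_inv_cancel₀ h2
      refine ⟨(y - 1) * 2⁻¹, ?_, ?_⟩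
      · simp only [hS, Set.mem_setOf_eq]
        simp only [hT, Set.mem_setOf_eq] at hy
        push_cast at hy
        linear_combination ((2:ZMod p)⁻¹)^2 * hy + (-((2:ZMod p)⁻¹*(y+1)) - 1) * hc
      · simp only
        linear_combination (y - 1) * hc
  have hcard : S.ncard = T.ncard := by
    rw [← hbij.image_eq, Set.ncard_image_of_injOn hbij.injOn]
  rw [hcard, hT, Set.ncard_eq_toFinset_card']
  rw [legendreSym.card_sqrts (p := p) hp2 (-3), add_comm]


/-- Let `p` be a prime with `p ∉ {2, 3}` and let `e ≥ 1`. Then the number of residue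
classes `x` in `ℤ/p^eℤ` satisfying `x² + x + 1 = 0` equals `1 + (−3/p)`, where `(−3/p)`
is the Legendre symbol of `−3` modulo `p`. -/
theorem count_roots_x_sq_add_x_add_one_eq_one_add_legendreSym
    (p : ℕ) (hp : p.Prime) (hp2 : p ≠ 2) (hp3 : p ≠ 3) (e : ℕ) (he : 1 ≤ e) :
    ({x : ZMod (p ^ e) | x ^ 2 + x + 1 = 0}.ncard : ℤ) = 1 + @legendreSym p ⟨hp⟩ (-3) := by
  induction e, he using Nat.le_induction with
  | base =>
    rw [show p ^ 1 = p from pow_one p]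
    exact base_case p hp hp2 hp3
  | succ e he ih =>
    rw [step_case p hp hp3 e he]
    exact ih
end

section
/- Let p be a prime. For e ≥ 0 let q(e) denote the number of residue classes x in ℤ/p^eℤ satisfying x² + 1 = 0 (so q(0) = 1), and set q(e) = 0 for e < 0. Then for every integer e ≥ 0, the quantity q(e) − 2·q(e−1) + q(e−2) equals: in the case p odd: 1 if e = 0, (−1/p) − 1 if e = 1, −(−1/p) if e = 2, and 0 if e ≥ 3; in the case p = 2: 1 if e = 0, −1 if e = 1 or e = 2, 1 if e = 3, and 0 if e ≥ 4. -/
section aux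
variable {p : ℕ}

private lemma pow_neZero (hp : p.Prime) (n : ℕ) : NeZero (p ^ n) :=
  ⟨pow_ne_zero _ hp.pos.ne'⟩

private lemma aux_isUnit (hp : p.Prime) {n : ℕ} (hn : n ≠ 0) (x : ZMod (p ^ n))
    (h : ZMod.castHom (dvd_pow_self p hn) (ZMod p) x ≠ 0) : IsUnit x := by
  haveI := pow_neZero hp n
  rw [ZMod.castHom_apply, ← ZMod.natCast_val] at h
  have hx : x = ((x.val : ℕ) : ZMod (p ^ n)) := (ZMod.natCast_zmod_val x).symm
  rw [hx, ZMod.isUnit_iff_coprime]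
  have hnd : ¬ p ∣ x.val := by
    rw [← ZMod.natCast_eq_zero_iff]; exact h
  exact Nat.Coprime.pow_right _ ((Nat.coprime_comm).mp (hp.coprime_iff_not_dvd.mpr hnd))

private lemma aux_ker (hp : p.Prime) {e : ℕ} (x : ZMod (p ^ (e + 1)))
    (h : ZMod.castHom (pow_dvd_pow p e.le_succ) (ZMod (p ^ e)) x = 0) :
    ∃ t : ZMod (p ^ (e + 1)), x = (p : ZMod (p ^ (e + 1))) ^ e * t := by
  haveI := pow_neZero hp e
  haveI := pow_neZero hp (e + 1)
  have hx : (x.val : ZMod (p ^ e)) = 0 := by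
    rwa [ZMod.natCast_val, ← ZMod.castHom_apply (h := pow_dvd_pow p e.le_succ)]
  rw [ZMod.natCast_eq_zero_iff] at hx
  obtain ⟨c, hc⟩ := hx
  refine ⟨(c : ZMod (p ^ (e + 1))), ?_⟩
  have hx2 : x = ((x.val : ℕ) : ZMod (p ^ (e + 1))) := (ZMod.natCast_zmod_val x).symm
  rw [hx2, hc]; push_cast; ring

private lemma aux_two_mul_ne (hp : p.Prime) (hodd : Odd p) {b : ZMod p}
    (hb : b ^ 2 + 1 = 0) : (2 : ZMod p) * b ≠ 0 := by
  haveI : Fact p.Prime := ⟨hp⟩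
  have hb0 : b ≠ 0 := by
    intro h; rw [h] at hb; simp at hb
  have h2 : (2 : ZMod p) ≠ 0 := by
    have : ((2 : ℕ) : ZMod p) ≠ 0 := by
      rw [Ne, ZMod.natCast_eq_zero_iff]
      intro h
      have := (Nat.prime_dvd_prime_iff_eq hp Nat.prime_two).mp h
      exact (Nat.not_even_iff_odd.mpr hodd) (by simp [this])
    simpa using this
  exact mul_ne_zero h2 hb0

private lemma card_step (hp : p.Prime) (hodd : Odd p) (e : ℕ) (he : 1 ≤ e) :
    {x : ZMod (p ^ (e + 1)) | x ^ 2 + 1 = 0}.ncard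
      = {x : ZMod (p ^ e) | x ^ 2 + 1 = 0}.ncard := by
  haveI := pow_neZero hp e
  haveI := pow_neZero hp (e + 1)
  have he1 : e ≠ 0 := by omega
  have he2 : e + 1 ≠ 0 := by omega
  let f := ZMod.castHom (pow_dvd_pow p e.le_succ) (ZMod (p ^ e))
  let g1 := ZMod.castHom (dvd_pow_self p he2) (ZMod p)
  let ge := ZMod.castHom (dvd_pow_self p he1) (ZMod p)
  -- compatibility : ge ∘ f = g1
  have hcomp : ∀ x : ZMod (p ^ (e + 1)), ge (f x) = g1 x := by
    intro x
    show (ZMod.castHom (dvd_pow_self p he1) (ZMod p)).comp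
      (ZMod.castHom (pow_dvd_pow p e.le_succ) (ZMod (p ^ e))) x = g1 x
    rw [ZMod.castHom_comp]
  -- roots reduce to roots
  have hred1 : ∀ x : ZMod (p ^ (e + 1)), x ^ 2 + 1 = 0 → (g1 x) ^ 2 + 1 = 0 := by
    intro x hx
    have := congrArg g1 hx
    simp only [map_add, map_pow, map_one, map_zero] at this
    exact this
  have hrede : ∀ x : ZMod (p ^ e), x ^ 2 + 1 = 0 → (ge x) ^ 2 + 1 = 0 := by
    intro x hx
    have := congrArg ge hx
    simp only [map_add, map_pow, map_one, map_zero] at this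
    exact this
  -- injectivity on roots
  have hinj : Set.InjOn f {x : ZMod (p ^ (e + 1)) | x ^ 2 + 1 = 0} := by
    intro x hx y hy hxy
    have hx' : x ^ 2 + 1 = 0 := hx
    have hy' : y ^ 2 + 1 = 0 := hy
    have hsq : (x + y) * (x - y) = 0 := by linear_combination hx' - hy'
    have hxyp : g1 x = g1 y := by rw [← hcomp, ← hcomp, hxy]
    have hu : IsUnit (x + y) := by
      apply aux_isUnit hp he2
      show g1 (x + y) ≠ 0
      rw [map_add, ← hxyp, ← two_mul]
      exact aux_two_mul_ne hp hodd (hred1 x hx')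
    exact sub_eq_zero.mp ((IsUnit.mul_right_eq_zero hu).mp hsq)
  -- surjectivity onto roots
  have hsurj : Set.SurjOn f {x : ZMod (p ^ (e + 1)) | x ^ 2 + 1 = 0}
      {x : ZMod (p ^ e) | x ^ 2 + 1 = 0} := by
    intro a ha
    have ha' : a ^ 2 + 1 = 0 := ha
    set x : ZMod (p ^ (e + 1)) := ((a.val : ℕ) : ZMod (p ^ (e + 1))) with hxdef
    have hfx : f x = a := by
      rw [hxdef, map_natCast, ZMod.natCast_zmod_val]
    have hker : f (x ^ 2 + 1) = 0 := by
      rw [map_add, map_pow, map_one, hfx, ha']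
    obtain ⟨t, ht⟩ := aux_ker hp _ hker
    have hu : IsUnit (2 * x) := by
      apply aux_isUnit hp he2
      show g1 (2 * x) ≠ 0
      have : g1 x = ge a := by rw [← hfx, hcomp]
      rw [map_mul, map_ofNat, this]
      exact aux_two_mul_ne hp hodd (hrede a ha')
    obtain ⟨u, hu2⟩ := hu.exists_right_inv
    refine ⟨x - (p : ZMod (p ^ (e + 1))) ^ e * t * u, ?_, ?_⟩
    · show (x - (p : ZMod (p ^ (e + 1))) ^ e * t * u) ^ 2 + 1 = 0
      have hpe : (p : ZMod (p ^ (e + 1))) ^ e * (p : ZMod (p ^ (e + 1))) ^ e = 0 := by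
        rw [← pow_add]
        have : ((p ^ (e + e) : ℕ) : ZMod (p ^ (e + 1))) = 0 := by
          rw [ZMod.natCast_eq_zero_iff]
          exact pow_dvd_pow p (by omega)
        push_cast at this
        exact this
      calc (x - (p : ZMod (p ^ (e + 1))) ^ e * t * u) ^ 2 + 1
          = (x ^ 2 + 1) - (2 * x * u) * ((p : ZMod (p ^ (e + 1))) ^ e * t)
            + ((p : ZMod (p ^ (e + 1))) ^ e * (p : ZMod (p ^ (e + 1))) ^ e) * (t ^ 2 * u ^ 2) := by
            ring
        _ = 0 := by rw [ht, hpe]; linear_combination (-((p : ZMod (p ^ (e + 1))) ^ e * t)) * hu2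
    · rw [map_sub, hfx, map_mul, map_mul, map_pow, map_natCast]
      have : ((p : ZMod (p ^ e))) ^ e = 0 := by
        have : ((p ^ e : ℕ) : ZMod (p ^ e)) = 0 := ZMod.natCast_self _
        push_cast at this
        exact this
      rw [this]
      ring
  have himg : f '' {x : ZMod (p ^ (e + 1)) | x ^ 2 + 1 = 0}
      = {x : ZMod (p ^ e) | x ^ 2 + 1 = 0} := by
    apply Set.Subset.antisymm
    · rintro _ ⟨x, hx, rfl⟩
      exact hred1 x hx |> fun h => by
        show (f x) ^ 2 + 1 = 0
        have := congrArg f (show x ^ 2 + 1 = 0 from hx)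
        simpa only [map_add, map_pow, map_one, map_zero] using this
    · exact hsurj
  rw [← himg, Set.ncard_image_of_injOn hinj]

end aux

section counts
variable {p : ℕ}

private lemma count_congr {m n : ℕ} (h : m = n) :
    {x : ZMod m | x ^ 2 + 1 = 0}.ncard = {x : ZMod n | x ^ 2 + 1 = 0}.ncard := by
  subst h; rfl

private lemma count_zero (p : ℕ) : (({x : ZMod (p ^ 0) | x ^ 2 + 1 = 0}.ncard : ℤ)) = 1 := by
  rw [count_congr (pow_zero p)]
  have : {x : ZMod 1 | x ^ 2 + 1 = 0} = Set.univ := by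
    ext x
    simp only [Set.mem_setOf_eq, Set.mem_univ, iff_true]
    exact Subsingleton.elim _ _
  rw [this, Set.ncard_univ]
  simp [Nat.card_eq_fintype_card]

private lemma count_odd_one (hp : p.Prime) (hne : p ≠ 2) [Fact p.Prime] :
    (({x : ZMod (p ^ 1) | x ^ 2 + 1 = 0}.ncard : ℤ)) = legendreSym p (-1) + 1 := by
  rw [count_congr (pow_one p)]
  have hset : {x : ZMod p | x ^ 2 + 1 = 0} = {x : ZMod p | x ^ 2 = ((-1 : ℤ) : ZMod p)} := by
    ext x
    simp only [Set.mem_setOf_eq, Int.cast_neg, Int.cast_one]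
    constructor
    · intro h; linear_combination h
    · intro h; linear_combination h
  rw [hset, Set.ncard_eq_toFinset_card']
  exact_mod_cast legendreSym.card_sqrts p hne (-1)

private lemma count_odd (hp : p.Prime) (hodd : Odd p) [Fact p.Prime] :
    ∀ e : ℕ, 1 ≤ e →
    (({x : ZMod (p ^ e) | x ^ 2 + 1 = 0}.ncard : ℤ)) = legendreSym p (-1) + 1 := by
  have hne : p ≠ 2 := by rintro rfl; exact (by decide : ¬ Odd 2) hodd
  intro e he
  induction e with
  | zero => omega
  | succ n ih =>
    rcases Nat.eq_or_lt_of_le he with h | h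
    · have hn0 : n = 0 := by omega
      subst hn0
      exact count_odd_one hp hne
    · have hn : 1 ≤ n := by omega
      rw [card_step hp hodd n hn]
      exact ih hn

private lemma count_two_one : (({x : ZMod (2 ^ 1) | x ^ 2 + 1 = 0}.ncard : ℤ)) = 1 := by
  have : {x : ZMod (2 ^ 1) | x ^ 2 + 1 = 0} = {(1 : ZMod (2 ^ 1))} := by
    ext x; constructor <;> revert x <;> decide
  rw [this, Set.ncard_singleton]
  norm_num

private lemma count_two (e : ℕ) (he : 2 ≤ e) :
    (({x : ZMod (2 ^ e) | x ^ 2 + 1 = 0}.ncard : ℤ)) = 0 := by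
  have : {x : ZMod (2 ^ e) | x ^ 2 + 1 = 0} = ∅ := by
    rw [Set.eq_empty_iff_forall_notMem]
    intro x hx
    have hx' : x ^ 2 + 1 = 0 := hx
    have := congrArg (ZMod.castHom (pow_dvd_pow 2 he) (ZMod (2 ^ 2))) hx'
    simp only [map_add, map_pow, map_one, map_zero] at this
    exact (by decide : ∀ y : ZMod (2 ^ 2), ¬ (y ^ 2 + 1 = 0)) _ this
  rw [this]
  simp

end counts



/-- Let `p` be a prime and, for `e ≥ 0`, let `q e` be the number of residue classes `x`
in `ℤ/p^eℤ` with `x² + 1 = 0` (so `q 0 = 1`), with `q e = 0` for `e < 0`. Then for every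
`e ≥ 0`, `q e − 2 q (e−1) + q (e−2)` equals: for `p` odd: `1` if `e = 0`, `(−1/p) − 1` if
`e = 1`, `−(−1/p)` if `e = 2`, and `0` if `e ≥ 3`; for `p = 2`: `1` if `e = 0`, `−1` if
`e = 1` or `e = 2`, `1` if `e = 3`, and `0` if `e ≥ 4`. -/
theorem second_difference_count_roots_x_sq_add_one
    (p : ℕ) (hp : p.Prime) (q : ℤ → ℤ)
    (hq : ∀ e : ℕ, q e = {x : ZMod (p ^ e) | x ^ 2 + 1 = 0}.ncard)
    (hneg : ∀ e : ℤ, e < 0 → q e = 0) :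
    ∀ e : ℕ,
      (Odd p →
        (e = 0 → q e - 2 * q ((e : ℤ) - 1) + q ((e : ℤ) - 2) = 1) ∧
        (e = 1 → q e - 2 * q ((e : ℤ) - 1) + q ((e : ℤ) - 2) = @legendreSym p ⟨hp⟩ (-1) - 1) ∧
        (e = 2 → q e - 2 * q ((e : ℤ) - 1) + q ((e : ℤ) - 2) = -(@legendreSym p ⟨hp⟩ (-1))) ∧
        (3 ≤ e → q e - 2 * q ((e : ℤ) - 1) + q ((e : ℤ) - 2) = 0)) ∧
      (p = 2 →
        (e = 0 → q e - 2 * q ((e : ℤ) - 1) + q ((e : ℤ) - 2) = 1) ∧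
        (e = 1 ∨ e = 2 → q e - 2 * q ((e : ℤ) - 1) + q ((e : ℤ) - 2) = -1) ∧
        (e = 3 → q e - 2 * q ((e : ℤ) - 1) + q ((e : ℤ) - 2) = 1) ∧
        (4 ≤ e → q e - 2 * q ((e : ℤ) - 1) + q ((e : ℤ) - 2) = 0)) := by
  intro e
  constructor
  · intro hodd
    haveI : Fact p.Prime := ⟨hp⟩
    have h0 : q ((0 : ℕ) : ℤ) = 1 := (hq 0).trans (count_zero p)
    refine ⟨?_, ?_, ?_, ?_⟩
    · rintro rfl
      have hm1 : ((0 : ℕ) : ℤ) - 1 = -1 := by norm_num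
      have hm2 : ((0 : ℕ) : ℤ) - 2 = -2 := by norm_num
      rw [hm1, hm2, hneg (-1) (by norm_num), hneg (-2) (by norm_num), h0]
      ring
    · rintro rfl
      have h1 : q ((1 : ℕ) : ℤ) = legendreSym p (-1) + 1 :=
        (hq 1).trans (count_odd hp hodd 1 le_rfl)
      have hm1 : ((1 : ℕ) : ℤ) - 1 = ((0 : ℕ) : ℤ) := by norm_num
      have hm2 : ((1 : ℕ) : ℤ) - 2 = -1 := by norm_num
      rw [hm1, hm2, hneg (-1) (by norm_num), h1, h0]
      ring
    · rintro rfl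
      have h1 : q ((1 : ℕ) : ℤ) = legendreSym p (-1) + 1 :=
        (hq 1).trans (count_odd hp hodd 1 le_rfl)
      have h2 : q ((2 : ℕ) : ℤ) = legendreSym p (-1) + 1 :=
        (hq 2).trans (count_odd hp hodd 2 (by norm_num))
      have hm1 : ((2 : ℕ) : ℤ) - 1 = ((1 : ℕ) : ℤ) := by norm_num
      have hm2 : ((2 : ℕ) : ℤ) - 2 = ((0 : ℕ) : ℤ) := by norm_num
      rw [hm1, hm2, h2, h1, h0]
      ring
    · intro he
      have k1 : ((e : ℤ) - 1) = ((e - 1 : ℕ) : ℤ) := by omega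
      have k2 : ((e : ℤ) - 2) = ((e - 2 : ℕ) : ℤ) := by omega
      have He : q e = legendreSym p (-1) + 1 :=
        (hq e).trans (count_odd hp hodd e (by omega))
      have He1 : q ((e - 1 : ℕ) : ℤ) = legendreSym p (-1) + 1 :=
        (hq (e - 1)).trans (count_odd hp hodd (e - 1) (by omega))
      have He2 : q ((e - 2 : ℕ) : ℤ) = legendreSym p (-1) + 1 :=
        (hq (e - 2)).trans (count_odd hp hodd (e - 2) (by omega))
      rw [k1, k2, He, He1, He2]
      ring
  · rintro rfl
    have h0 : q ((0 : ℕ) : ℤ) = 1 := (hq 0).trans (count_zero 2)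
    have h1 : q ((1 : ℕ) : ℤ) = 1 := (hq 1).trans count_two_one
    have hbig : ∀ n : ℕ, 2 ≤ n → q (n : ℤ) = 0 := fun n hn =>
      (hq n).trans (count_two n hn)
    refine ⟨?_, ?_, ?_, ?_⟩
    · rintro rfl
      have hm1 : ((0 : ℕ) : ℤ) - 1 = -1 := by norm_num
      have hm2 : ((0 : ℕ) : ℤ) - 2 = -2 := by norm_num
      rw [hm1, hm2, hneg (-1) (by norm_num), hneg (-2) (by norm_num), h0]
      ring
    · rintro (rfl | rfl)
      · have hm1 : ((1 : ℕ) : ℤ) - 1 = ((0 : ℕ) : ℤ) := by norm_num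
        have hm2 : ((1 : ℕ) : ℤ) - 2 = -1 := by norm_num
        rw [hm1, hm2, hneg (-1) (by norm_num), h1, h0]
        ring
      · have hm1 : ((2 : ℕ) : ℤ) - 1 = ((1 : ℕ) : ℤ) := by norm_num
        have hm2 : ((2 : ℕ) : ℤ) - 2 = ((0 : ℕ) : ℤ) := by norm_num
        rw [hm1, hm2, hbig 2 le_rfl, h1, h0]
        ring
    · rintro rfl
      have hm1 : ((3 : ℕ) : ℤ) - 1 = ((2 : ℕ) : ℤ) := by norm_num
      have hm2 : ((3 : ℕ) : ℤ) - 2 = ((1 : ℕ) : ℤ) := by norm_num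
      rw [hm1, hm2, hbig 3 (by norm_num), hbig 2 le_rfl, h1]
      ring
    · intro he
      have k1 : ((e : ℤ) - 1) = ((e - 1 : ℕ) : ℤ) := by omega
      have k2 : ((e : ℤ) - 2) = ((e - 2 : ℕ) : ℤ) := by omega
      rw [k1, k2, hbig e (by omega), hbig (e - 1) (by omega), hbig (e - 2) (by omega)]
      ring
end

section
/- Let K be an imaginary quadratic field with ring of integers 𝒪_K, let p be an odd rational prime that is inert in K (i.e. p𝒪_K is a prime ideal), and let n ≥ 2 be an integer. Then the number of characters of (𝒪_K/p^n𝒪_K)^× that are trivial on rational integers and nontrivial on the kernel of the natural reduction map (𝒪_K/p^n𝒪_K)^× → (𝒪_K/p^{n−1}𝒪_K)^× equals p^{n−2}(p² − 1). -/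
open NumberField

open NumberField
set_option synthInstance.maxHeartbeats 1000000
set_option maxHeartbeats 1000000
set_option linter.unusedSectionVars false
set_option linter.unusedVariables false
set_option linter.unusedTactic false

section CharCount

variable (A : Type*) [CommGroup A] [Finite A]

lemma aux_finite_chars : Finite (A →* ℂˣ) := by
  have : NeZero (Monoid.exponent A) := ⟨Monoid.exponent_ne_zero_of_finite⟩
  obtain ⟨e⟩ := CommGroup.monoidHom_mulEquiv_of_hasEnoughRootsOfUnity A ℂ
  exact Finite.of_equiv A e.symm.toEquiv

lemma aux_card_chars : Nat.card (A →* ℂˣ) = Nat.card A := by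
  have : NeZero (Monoid.exponent A) := ⟨Monoid.exponent_ne_zero_of_finite⟩
  obtain ⟨e⟩ := CommGroup.monoidHom_mulEquiv_of_hasEnoughRootsOfUnity A ℂ
  exact Nat.card_congr e.toEquiv

variable {A}

lemma aux_card_trivial_on (S : Subgroup A) :
    Nat.card {χ : A →* ℂˣ // ∀ u ∈ S, χ u = 1} = Nat.card (A ⧸ S) := by
  have e : {χ : A →* ℂˣ // ∀ u ∈ S, χ u = 1} ≃ (A ⧸ S →* ℂˣ) := by
    refine ⟨fun χ => QuotientGroup.lift S χ.1 (fun u hu => χ.2 u hu),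
      fun f => ⟨f.comp (QuotientGroup.mk' S), fun u hu => ?_⟩, fun χ => ?_, fun f => ?_⟩
    · simp only [MonoidHom.comp_apply, QuotientGroup.mk'_apply]
      rw [(QuotientGroup.eq_one_iff u).2 hu, map_one]
    · ext u; rfl
    · ext u; rfl
  rw [Nat.card_congr e, aux_card_chars]

lemma aux_card_split {α : Type*} [Finite α] (P Q : α → Prop) :
    Nat.card {x // P x} = Nat.card {x // P x ∧ Q x} + Nat.card {x // P x ∧ ¬ Q x} := by
  classical
  rw [← Nat.card_sum]
  refine Nat.card_congr ?_
  exact ((Equiv.sumCompl (fun y : {x // P x} => Q y.1)).symm.trans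
    (Equiv.sumCongr (Equiv.subtypeSubtypeEquivSubtypeInter P Q)
      (Equiv.subtypeSubtypeEquivSubtypeInter P (fun x => ¬ Q x))))
end CharCount

section NF
variable {K : Type*} [Field K] [NumberField K] (hdeg : Module.finrank ℚ K = 2)
include hdeg

lemma aux_norm_intCast (m : ℤ) :
    Algebra.norm ℤ ((m : ℤ) : 𝓞 K) = m ^ 2 := by
  have b := Module.Free.chooseBasis ℤ (𝓞 K)
  have h := Algebra.norm_algebraMap_of_basis b m
  rwa [← Module.finrank_eq_card_chooseBasisIndex, RingOfIntegers.rank, hdeg] at h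

lemma aux_cast_dvd {a : ℕ} {b : ℤ} (h : (a : 𝓞 K) ∣ (b : 𝓞 K)) : (a : ℤ) ∣ b := by
  obtain ⟨c, hc⟩ := h
  have h2 : (b : 𝓞 K) = ((a : ℤ) : 𝓞 K) * c := by push_cast; exact_mod_cast hc
  have h3 : Algebra.norm ℤ ((b : ℤ) : 𝓞 K) = Algebra.norm ℤ (((a:ℤ) : 𝓞 K)) * Algebra.norm ℤ c := by
    rw [h2, map_mul]
  rw [aux_norm_intCast hdeg, aux_norm_intCast hdeg] at h3
  have h4 : (a : ℤ) ^ 2 ∣ b ^ 2 := ⟨_, h3⟩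
  exact (Int.pow_dvd_pow_iff two_ne_zero).mp h4

variable (p : ℕ)

lemma aux_charP (k : ℕ) : CharP (𝓞 K ⧸ Ideal.span {(p : 𝓞 K) ^ k}) (p ^ k) := by
  constructor
  intro a
  rw [show ((a : ℕ) : 𝓞 K ⧸ Ideal.span {(p : 𝓞 K) ^ k}) =
    Ideal.Quotient.mk _ ((a : 𝓞 K)) by push_cast; rfl]
  rw [Ideal.Quotient.eq_zero_iff_mem, Ideal.mem_span_singleton]
  constructor
  · intro h
    have : ((p ^ k : ℕ) : 𝓞 K) ∣ ((a : ℤ) : 𝓞 K) := by push_cast at h ⊢; exact h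
    have := aux_cast_dvd hdeg this
    exact_mod_cast this
  · intro h
    obtain ⟨c, rfl⟩ := h
    push_cast
    exact Dvd.intro _ rfl

lemma aux_card_quot (hp0 : p ≠ 0) (k : ℕ) :
    Nat.card (𝓞 K ⧸ Ideal.span {(p : 𝓞 K) ^ k}) = p ^ (2 * k) := by
  have h1 : Nat.card (𝓞 K ⧸ Ideal.span {(p : 𝓞 K) ^ k})
      = Ideal.absNorm (Ideal.span {(p : 𝓞 K) ^ k}) := by
    rw [Ideal.absNorm_apply, Submodule.cardQuot_apply]
  rw [h1, Ideal.absNorm_span_singleton, map_pow]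
  rw [show ((p : 𝓞 K)) = ((p : ℤ) : 𝓞 K) by push_cast; rfl, aux_norm_intCast hdeg]
  rw [← pow_mul, Int.natAbs_pow]
  simp [mul_comm]

end NF

section LocalStruct
variable {K : Type*} [Field K] [NumberField K]
  (hdeg : Module.finrank ℚ K = 2)
  {p : ℕ} (hp : p.Prime)
  (hinert : (Ideal.span {(p : 𝓞 K)}).IsPrime)

lemma aux_le_span (k : ℕ) (hk : 1 ≤ k) :
    Ideal.span {(p : 𝓞 K) ^ k} ≤ Ideal.span {(p : 𝓞 K)} :=
  Ideal.span_singleton_le_span_singleton.mpr (dvd_pow_self _ (by omega))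

include hp

lemma aux_p_ne_zero : (p : 𝓞 K) ≠ 0 := Nat.cast_ne_zero.mpr hp.ne_zero

include hinert

lemma aux_quot_quot (k : ℕ) (hk : 1 ≤ k) :
    Nonempty (((𝓞 K ⧸ Ideal.span {(p : 𝓞 K) ^ k}) ⧸
      (Ideal.span {(p : 𝓞 K)}).map (Ideal.Quotient.mk (Ideal.span {(p : 𝓞 K) ^ k})))
      ≃+* 𝓞 K ⧸ Ideal.span {(p : 𝓞 K)}) := by
  refine ⟨(DoubleQuot.quotQuotEquivQuotSup _ _).trans (Ideal.quotEquivOfEq ?_)⟩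
  exact sup_eq_right.mpr (aux_le_span k hk)

lemma aux_map_ne_top (k : ℕ) (hk : 1 ≤ k) :
    (Ideal.span {(p : 𝓞 K)}).map (Ideal.Quotient.mk (Ideal.span {(p : 𝓞 K) ^ k})) ≠ ⊤ := by
  intro h
  have h1 : Subsingleton ((𝓞 K ⧸ Ideal.span {(p : 𝓞 K) ^ k}) ⧸
      (Ideal.span {(p : 𝓞 K)}).map (Ideal.Quotient.mk (Ideal.span {(p : 𝓞 K) ^ k}))) := by
    rw [h]
    exact Submodule.Quotient.subsingleton_iff.mpr rfl
  obtain ⟨e⟩ := aux_quot_quot (K := K) hp hinert k hk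
  have h2 : Subsingleton (𝓞 K ⧸ Ideal.span {(p : 𝓞 K)}) := e.toEquiv.symm.subsingleton
  have h3 : Nontrivial (𝓞 K ⧸ Ideal.span {(p : 𝓞 K)}) :=
    Ideal.Quotient.nontrivial_iff.mpr hinert.ne_top
  exact false_of_nontrivial_of_subsingleton (𝓞 K ⧸ Ideal.span {(p : 𝓞 K)})

lemma aux_isUnit_iff (k : ℕ) (hk : 1 ≤ k) (x : 𝓞 K ⧸ Ideal.span {(p : 𝓞 K) ^ k}) :
    IsUnit x ↔ x ∉ (Ideal.span {(p : 𝓞 K)}).map (Ideal.Quotient.mk (Ideal.span {(p : 𝓞 K) ^ k})) := by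
  constructor
  · intro h hx
    exact aux_map_ne_top hp hinert k hk (Ideal.eq_top_of_isUnit_mem _ hx h)
  · intro hx
    obtain ⟨y, rfl⟩ := Ideal.Quotient.mk_surjective x
    have h1 : y ∉ Ideal.span {(p : 𝓞 K)} := fun hy => hx (Ideal.mem_map_of_mem _ hy)
    have hmax : (Ideal.span {(p : 𝓞 K)}).IsMaximal := by
      refine hinert.isMaximal ?_
      rw [ne_eq, Ideal.span_singleton_eq_bot]
      exact aux_p_ne_zero hp
    obtain ⟨z, i, hi, hzy⟩ := hmax.exists_inv h1
    have hnil : IsNilpotent (Ideal.Quotient.mk (Ideal.span {(p : 𝓞 K) ^ k}) i) := by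
      refine ⟨k, ?_⟩
      rw [← map_pow, Ideal.Quotient.eq_zero_iff_mem, ← Ideal.span_singleton_pow]
      exact Ideal.pow_mem_pow hi k
    have he : (Ideal.Quotient.mk (Ideal.span {(p : 𝓞 K) ^ k}) z) *
        (Ideal.Quotient.mk (Ideal.span {(p : 𝓞 K) ^ k}) y) =
        1 - Ideal.Quotient.mk (Ideal.span {(p : 𝓞 K) ^ k}) i := by
      have := congrArg (Ideal.Quotient.mk (Ideal.span {(p : 𝓞 K) ^ k})) hzy
      rw [map_add, map_mul, map_one] at this
      linear_combination this
    have hu : IsUnit ((Ideal.Quotient.mk (Ideal.span {(p : 𝓞 K) ^ k}) z) *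
        (Ideal.Quotient.mk (Ideal.span {(p : 𝓞 K) ^ k}) y)) := by
      rw [he]; exact hnil.isUnit_one_sub
    exact isUnit_of_mul_isUnit_right hu

end LocalStruct
section Count
variable {K : Type*} [Field K] [NumberField K]
  (hdeg : Module.finrank ℚ K = 2)
  {p : ℕ} (hp : p.Prime)
  (hinert : (Ideal.span {(p : 𝓞 K)}).IsPrime)

include hdeg hp hinert

lemma aux_card_units (k : ℕ) (hk : 1 ≤ k) :
    Nat.card (𝓞 K ⧸ Ideal.span {(p : 𝓞 K) ^ k})ˣ = p ^ (2*k) - p ^ (2*k-2) := by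
  classical
  have hfin : Finite (𝓞 K ⧸ Ideal.span {(p : 𝓞 K) ^ k}) := by
    refine Nat.finite_of_card_ne_zero ?_
    rw [aux_card_quot hdeg p hp.ne_zero k]
    exact (pow_pos hp.pos _).ne'
  set Q := 𝓞 K ⧸ Ideal.span {(p : 𝓞 K) ^ k} with hQ
  set M := (Ideal.span {(p : 𝓞 K)}).map (Ideal.Quotient.mk (Ideal.span {(p : 𝓞 K) ^ k})) with hM
  have h1 : Nat.card Q = Nat.card M * Nat.card (Q ⧸ M) :=
    Submodule.card_eq_card_quotient_mul_card M
  obtain ⟨e⟩ := aux_quot_quot (K := K) hp hinert k hk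
  have hcardQ : Nat.card Q = p ^ (2*k) := aux_card_quot hdeg p hp.ne_zero k
  have h2 : Nat.card (Q ⧸ M) = p ^ 2 := by
    rw [Nat.card_congr e.toEquiv]
    have h := aux_card_quot (K := K) hdeg p hp.ne_zero 1
    rw [pow_one] at h
    rw [h]
  have h3 : Nat.card M = p ^ (2*k-2) := by
    have hpos : 0 < p ^ 2 := pow_pos hp.pos 2
    have h4 := h1
    rw [hcardQ, h2] at h4
    refine Nat.eq_of_mul_eq_mul_right hpos ?_
    rw [← h4, ← pow_add]
    congr 1
    omega
  have e1 : Qˣ ≃ {x : Q // x ∉ M} := by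
    refine (Equiv.ofBijective (fun u => ⟨(u : Q), ?_⟩) ⟨?_, ?_⟩)
    · exact (aux_isUnit_iff hp hinert k hk _).mp u.isUnit
    · intro u v huv
      exact Units.ext (congrArg Subtype.val huv)
    · rintro ⟨x, hx⟩
      obtain ⟨u, hu⟩ := (aux_isUnit_iff hp hinert k hk x).mpr hx
      exact ⟨u, by simp [hu]⟩
  rw [Nat.card_congr e1]
  have ft : Fintype Q := Fintype.ofFinite Q
  have h5 : Nat.card {x : Q // x ∉ M} = Nat.card Q - Nat.card {x : Q // x ∈ M} := by
    simp only [Nat.card_eq_fintype_card]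
    exact Fintype.card_subtype_compl _
  have h6 : Nat.card {x : Q // x ∈ M} = Nat.card M := rfl
  rw [h5, h6, hcardQ, h3]

end Count
section ZModPart
variable {K : Type*} [Field K] [NumberField K]
  (hdeg : Module.finrank ℚ K = 2)
  {p : ℕ} (hp : p.Prime)
  (hinert : (Ideal.span {(p : 𝓞 K)}).IsPrime)

include hp in
lemma aux_isUnit_zmod {k : ℕ} {m : ℤ} (hdvd : ¬ (p : ℤ) ∣ m) :
    IsUnit ((m : ZMod (p ^ k))) := by
  have hpInt : Prime (p : ℤ) := Nat.prime_iff_prime_int.mp hp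
  have hco : IsCoprime ((p : ℤ) ^ k) m :=
    ((hpInt.irreducible.coprime_iff_not_dvd).mpr hdvd).pow_left
  obtain ⟨a, b, hab⟩ := hco
  have h := congrArg (fun z : ℤ => (z : ZMod (p ^ k))) hab
  push_cast at h
  have h0 : ((p : ZMod (p ^ k))) ^ k = 0 := by
    have h1 := ZMod.natCast_self (p ^ k)
    push_cast at h1
    exact h1
  rw [h0] at h
  simp only [mul_zero, zero_add, zero_mul] at h
  exact IsUnit.of_mul_eq_one _ (by rw [mul_comm]; exact h)

include hdeg hp hinert in
lemma aux_mem_H_iff (k : ℕ) (hk : 1 ≤ k)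
    (f : ZMod (p ^ k) →+* (𝓞 K ⧸ Ideal.span {(p : 𝓞 K) ^ k}))
    (u : (𝓞 K ⧸ Ideal.span {(p : 𝓞 K) ^ k})ˣ) :
    u ∈ (Units.map f.toMonoidHom).range ↔
      ∃ m : ℤ, (u : 𝓞 K ⧸ Ideal.span {(p : 𝓞 K) ^ k}) =
        Ideal.Quotient.mk (Ideal.span {(p : 𝓞 K) ^ k}) ((m : 𝓞 K)) := by
  constructor
  · rintro ⟨v, rfl⟩
    obtain ⟨m, hm⟩ := ZMod.intCast_surjective (v : ZMod (p ^ k))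
    refine ⟨m, ?_⟩
    have h1 : ((Units.map f.toMonoidHom v : _) : 𝓞 K ⧸ Ideal.span {(p : 𝓞 K) ^ k})
        = f (v : ZMod (p ^ k)) := rfl
    rw [h1, ← hm, map_intCast]
    exact (map_intCast (Ideal.Quotient.mk (Ideal.span {(p : 𝓞 K) ^ k})) m).symm
  · rintro ⟨m, hm⟩
    by_cases hdvd : (p : ℤ) ∣ m
    · exfalso
      obtain ⟨c, rfl⟩ := hdvd
      have h2 : (((p : ℤ) * c : ℤ) : 𝓞 K) ∈ Ideal.span {(p : 𝓞 K)} := by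
        rw [Ideal.mem_span_singleton]
        exact ⟨(c : 𝓞 K), by push_cast; ring⟩
      have h3 : (u : 𝓞 K ⧸ Ideal.span {(p : 𝓞 K) ^ k}) ∈
          (Ideal.span {(p : 𝓞 K)}).map (Ideal.Quotient.mk (Ideal.span {(p : 𝓞 K) ^ k})) := by
        rw [hm]; exact Ideal.mem_map_of_mem _ h2
      exact (aux_isUnit_iff hp hinert k hk _).mp u.isUnit h3
    · have hu : IsUnit ((m : ZMod (p ^ k))) := aux_isUnit_zmod hp hdvd
      refine ⟨hu.unit, Units.ext ?_⟩
      have h1 : ((Units.map f.toMonoidHom hu.unit : _) : 𝓞 K ⧸ Ideal.span {(p : 𝓞 K) ^ k})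
          = f ((m : ZMod (p ^ k))) := congrArg f hu.unit_spec
      rw [h1, map_intCast, hm]
      exact (map_intCast (Ideal.Quotient.mk (Ideal.span {(p : 𝓞 K) ^ k})) m).symm

include hp in
lemma aux_card_H (k : ℕ) (hk : 1 ≤ k)
    (f : ZMod (p ^ k) →+* (𝓞 K ⧸ Ideal.span {(p : 𝓞 K) ^ k}))
    (hf : Function.Injective f) :
    Nat.card (Units.map f.toMonoidHom).range = p ^ (k - 1) * (p - 1) := by
  have : NeZero (p ^ k) := ⟨(pow_pos hp.pos k).ne'⟩
  have hinj : Function.Injective (Units.map f.toMonoidHom) := Units.map_injective hf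
  rw [← Nat.card_congr (MonoidHom.ofInjective hinj).toEquiv, Nat.card_eq_fintype_card,
    ZMod.card_units_eq_totient, Nat.totient_prime_pow hp (by omega)]

end ZModPart
section Red
variable {K : Type*} [Field K] [NumberField K]
  (hdeg : Module.finrank ℚ K = 2)
  {p : ℕ} (hp : p.Prime)
  (hinert : (Ideal.span {(p : 𝓞 K)}).IsPrime)

include hp hinert in
lemma aux_red_surjective (a b : ℕ) (hb : 1 ≤ b) (hba : b ≤ a)
    (hle : Ideal.span {(p : 𝓞 K) ^ a} ≤ Ideal.span {(p : 𝓞 K) ^ b}) :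
    Function.Surjective
      (Units.map (Ideal.Quotient.factor hle).toMonoidHom) := by
  set red := Ideal.Quotient.factor hle with hred
  intro v
  obtain ⟨y, hy⟩ := Ideal.Quotient.mk_surjective
    ((v : 𝓞 K ⧸ Ideal.span {(p : 𝓞 K) ^ b}))
  have hxv : red (Ideal.Quotient.mk (Ideal.span {(p : 𝓞 K) ^ a}) y)
      = (v : 𝓞 K ⧸ Ideal.span {(p : 𝓞 K) ^ b}) := by
    rw [hred, Ideal.Quotient.factor_mk, hy]
  have hx : IsUnit (Ideal.Quotient.mk (Ideal.span {(p : 𝓞 K) ^ a}) y) := by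
    rw [aux_isUnit_iff hp hinert a (le_trans hb hba) _]
    intro hmem
    obtain ⟨z, hz, hzx⟩ := Ideal.mem_map_iff_of_surjective _
      Ideal.Quotient.mk_surjective |>.mp hmem
    have h1 : (v : 𝓞 K ⧸ Ideal.span {(p : 𝓞 K) ^ b}) ∈
        (Ideal.span {(p : 𝓞 K)}).map (Ideal.Quotient.mk (Ideal.span {(p : 𝓞 K) ^ b})) := by
      rw [← hxv, ← hzx, hred, Ideal.Quotient.factor_mk]
      exact Ideal.mem_map_of_mem _ hz
    exact (aux_isUnit_iff hp hinert b hb _).mp v.isUnit h1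
  refine ⟨hx.unit, Units.ext ?_⟩
  have h2 : ((Units.map red.toMonoidHom hx.unit : _) : 𝓞 K ⧸ Ideal.span {(p : 𝓞 K) ^ b})
      = red (Ideal.Quotient.mk (Ideal.span {(p : 𝓞 K) ^ a}) y) := congrArg red hx.unit_spec
  rw [h2, hxv]

end Red

section Arith

lemma aux_arith1 {p k : ℕ} (hp2 : 2 ≤ p) (hk : 1 ≤ k) :
    p ^ (2*k) - p ^ (2*k-2) = (p ^ (k-1) * (p+1)) * (p ^ (k-1) * (p-1)) := by
  obtain ⟨q, rfl⟩ : ∃ q, p = q + 2 := ⟨p - 2, by omega⟩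
  obtain ⟨m, rfl⟩ : ∃ m, k = m + 1 := ⟨k - 1, by omega⟩
  have h1 : 2 * (m+1) - 2 = 2 * m := by omega
  have h2 : m + 1 - 1 = m := by omega
  have h3 : q + 2 - 1 = q + 1 := by omega
  rw [h1, h2, h3]
  refine Nat.sub_eq_of_eq_add ?_
  ring

lemma aux_arith2 {p n : ℕ} (hp2 : 2 ≤ p) (hn : 2 ≤ n) :
    p ^ (n-1) * (p+1) - p ^ (n-2) * (p+1) = p ^ (n-2) * (p^2 - 1) := by
  obtain ⟨q, rfl⟩ : ∃ q, p = q + 2 := ⟨p - 2, by omega⟩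
  obtain ⟨m, rfl⟩ : ∃ m, n = m + 2 := ⟨n - 2, by omega⟩
  have h1 : m + 2 - 1 = m + 1 := by omega
  have h2 : m + 2 - 2 = m := by omega
  have h3 : (q+2) ^ 2 - 1 = q*q + 4*q + 3 := Nat.sub_eq_of_eq_add (by ring)
  rw [h1, h2, h3]
  refine Nat.sub_eq_of_eq_add ?_
  ring

end Arith

section QuotCard
variable {K : Type*} [Field K] [NumberField K]
  (hdeg : Module.finrank ℚ K = 2)
  {p : ℕ} (hp : p.Prime)
  (hinert : (Ideal.span {(p : 𝓞 K)}).IsPrime)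

include hdeg hp hinert in
lemma aux_card_quot_range (k : ℕ) (hk : 1 ≤ k)
    (f : ZMod (p ^ k) →+* (𝓞 K ⧸ Ideal.span {(p : 𝓞 K) ^ k}))
    (hf : Function.Injective f) :
    Nat.card ((𝓞 K ⧸ Ideal.span {(p : 𝓞 K) ^ k})ˣ ⧸ (Units.map f.toMonoidHom).range)
      = p ^ (k-1) * (p+1) := by
  have h1 := Subgroup.card_eq_card_quotient_mul_card_subgroup (Units.map f.toMonoidHom).range
  rw [aux_card_units hdeg hp hinert k hk, aux_card_H hp k hk f hf] at h1
  have hpos : 0 < p ^ (k-1) * (p-1) :=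
    Nat.mul_pos (pow_pos hp.pos _) (by have := hp.two_le; omega)
  refine Nat.eq_of_mul_eq_mul_right hpos ?_
  rw [← h1, aux_arith1 hp.two_le hk]

end QuotCard

/-- Let `K` be an imaginary quadratic field, `p` an odd rational prime that is inert in
`K`, and `n ≥ 2`. Then the number of characters of `(𝓞 K / p^n 𝓞 K)ˣ` that are trivial
on rational integers and nontrivial on the kernel of the natural reduction map
`(𝓞 K / p^n 𝓞 K)ˣ → (𝓞 K / p^(n−1) 𝓞 K)ˣ` equals `p^(n−2) (p² − 1)`.
(A unit `u` lies in that kernel exactly when some (equivalently, any) lift `x ∈ 𝓞 K` of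
`u` reduces to `1` modulo `p^(n−1) 𝓞 K`.) -/
theorem card_characters_trivial_on_Int_primitive_inert
    (K : Type*) [Field K] [NumberField K]
    (hdeg : Module.finrank ℚ K = 2) (himag : IsEmpty (K →+* ℝ))
    (p : ℕ) (hp : p.Prime) (hp2 : p ≠ 2)
    (hinert : (Ideal.span {(p : 𝓞 K)}).IsPrime)
    (n : ℕ) (hn : 2 ≤ n) :
    Nat.card {χ : (𝓞 K ⧸ Ideal.span {(p : 𝓞 K) ^ n})ˣ →* ℂˣ //
      (∀ u : (𝓞 K ⧸ Ideal.span {(p : 𝓞 K) ^ n})ˣ,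
        (∃ m : ℤ, (u : 𝓞 K ⧸ Ideal.span {(p : 𝓞 K) ^ n}) =
          Ideal.Quotient.mk (Ideal.span {(p : 𝓞 K) ^ n}) (m : 𝓞 K)) →
        χ u = 1) ∧
      ∃ (u : (𝓞 K ⧸ Ideal.span {(p : 𝓞 K) ^ n})ˣ) (x : 𝓞 K),
        Ideal.Quotient.mk (Ideal.span {(p : 𝓞 K) ^ n}) x =
          (u : 𝓞 K ⧸ Ideal.span {(p : 𝓞 K) ^ n}) ∧
        Ideal.Quotient.mk (Ideal.span {(p : 𝓞 K) ^ (n - 1)}) x = 1 ∧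
        χ u ≠ 1} = p ^ (n - 2) * (p ^ 2 - 1) := by
  classical
  have hn0 : 1 ≤ n := by omega
  have hn1 : 1 ≤ n - 1 := by omega
  haveI cp : CharP (𝓞 K ⧸ Ideal.span {(p : 𝓞 K) ^ n}) (p ^ n) := aux_charP hdeg p n
  haveI cp' : CharP (𝓞 K ⧸ Ideal.span {(p : 𝓞 K) ^ (n-1)}) (p ^ (n-1)) :=
    aux_charP hdeg p (n-1)
  set f : ZMod (p ^ n) →+* 𝓞 K ⧸ Ideal.span {(p : 𝓞 K) ^ n} :=
    ZMod.castHom dvd_rfl _ with hfdef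
  set f' : ZMod (p ^ (n-1)) →+* 𝓞 K ⧸ Ideal.span {(p : 𝓞 K) ^ (n-1)} :=
    ZMod.castHom dvd_rfl _ with hf'def
  set H : Subgroup (𝓞 K ⧸ Ideal.span {(p : 𝓞 K) ^ n})ˣ :=
    (Units.map f.toMonoidHom).range with hHdef
  set H' : Subgroup (𝓞 K ⧸ Ideal.span {(p : 𝓞 K) ^ (n-1)})ˣ :=
    (Units.map f'.toMonoidHom).range with hH'def
  have hle : Ideal.span {(p : 𝓞 K) ^ n} ≤ Ideal.span {(p : 𝓞 K) ^ (n-1)} :=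
    Ideal.span_singleton_le_span_singleton.mpr (pow_dvd_pow _ (by omega))
  set red := Ideal.Quotient.factor hle with hreddef
  set redU := Units.map red.toMonoidHom with hredUdef
  set N := MonoidHom.ker redU with hNdef
  haveI hfinQ : Finite (𝓞 K ⧸ Ideal.span {(p : 𝓞 K) ^ n}) :=
    Nat.finite_of_card_ne_zero
      (by rw [aux_card_quot hdeg p hp.ne_zero n]; exact (pow_pos hp.pos _).ne')
  haveI hfinchars := aux_finite_chars ((𝓞 K ⧸ Ideal.span {(p : 𝓞 K) ^ n})ˣ)
  -- membership characterizations
  have hmemH : ∀ u : (𝓞 K ⧸ Ideal.span {(p : 𝓞 K) ^ n})ˣ,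
      (∃ m : ℤ, (u : 𝓞 K ⧸ Ideal.span {(p : 𝓞 K) ^ n}) =
        Ideal.Quotient.mk (Ideal.span {(p : 𝓞 K) ^ n}) ((m : 𝓞 K))) ↔ u ∈ H :=
    fun u => (aux_mem_H_iff hdeg hp hinert n hn0 f u).symm
  have hmemN : ∀ u : (𝓞 K ⧸ Ideal.span {(p : 𝓞 K) ^ n})ˣ,
      (∃ x : 𝓞 K, Ideal.Quotient.mk (Ideal.span {(p : 𝓞 K) ^ n}) x =
          (u : 𝓞 K ⧸ Ideal.span {(p : 𝓞 K) ^ n}) ∧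
        Ideal.Quotient.mk (Ideal.span {(p : 𝓞 K) ^ (n-1)}) x = 1) ↔ u ∈ N := by
    intro u
    constructor
    · rintro ⟨x, h1, h2⟩
      rw [hNdef, MonoidHom.mem_ker]
      rw [← Units.val_eq_one]
      show red (u : 𝓞 K ⧸ Ideal.span {(p : 𝓞 K) ^ n}) = 1
      rw [← h1, hreddef, Ideal.Quotient.factor_mk, h2]
    · intro hu
      obtain ⟨x, h1⟩ := Ideal.Quotient.mk_surjective
        ((u : 𝓞 K ⧸ Ideal.span {(p : 𝓞 K) ^ n}))
      refine ⟨x, h1, ?_⟩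
      rw [hNdef, MonoidHom.mem_ker, ← Units.val_eq_one] at hu
      have h3 : red (u : 𝓞 K ⧸ Ideal.span {(p : 𝓞 K) ^ n}) = 1 := hu
      rw [← h1, hreddef, Ideal.Quotient.factor_mk] at h3
      exact h3
  -- rewrite the subtype
  have hiff : ∀ χ : (𝓞 K ⧸ Ideal.span {(p : 𝓞 K) ^ n})ˣ →* ℂˣ,
      ((∀ u : (𝓞 K ⧸ Ideal.span {(p : 𝓞 K) ^ n})ˣ,
        (∃ m : ℤ, (u : 𝓞 K ⧸ Ideal.span {(p : 𝓞 K) ^ n}) =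
          Ideal.Quotient.mk (Ideal.span {(p : 𝓞 K) ^ n}) (m : 𝓞 K)) →
        χ u = 1) ∧
      ∃ (u : (𝓞 K ⧸ Ideal.span {(p : 𝓞 K) ^ n})ˣ) (x : 𝓞 K),
        Ideal.Quotient.mk (Ideal.span {(p : 𝓞 K) ^ n}) x =
          (u : 𝓞 K ⧸ Ideal.span {(p : 𝓞 K) ^ n}) ∧
        Ideal.Quotient.mk (Ideal.span {(p : 𝓞 K) ^ (n - 1)}) x = 1 ∧
        χ u ≠ 1) ↔
      ((∀ u ∈ H, χ u = 1) ∧ ¬ (∀ u ∈ N, χ u = 1)) := by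
    intro χ
    constructor
    · rintro ⟨h1, u, x, hx1, hx2, hx3⟩
      refine ⟨fun v hv => h1 v ((hmemH v).mpr hv), fun hQ => hx3 (hQ u ((hmemN u).mp ⟨x, hx1, hx2⟩))⟩
    · rintro ⟨h1, h2⟩
      refine ⟨fun v hv => h1 v ((hmemH v).mp hv), ?_⟩
      push_neg at h2
      obtain ⟨u, hu, hne⟩ := h2
      obtain ⟨x, hx1, hx2⟩ := (hmemN u).mpr hu
      exact ⟨u, x, hx1, hx2, hne⟩
  rw [Nat.card_congr (Equiv.subtypeEquivRight hiff)]
  -- counting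
  have hsplit := aux_card_split (fun χ : (𝓞 K ⧸ Ideal.span {(p : 𝓞 K) ^ n})ˣ →* ℂˣ =>
    ∀ u ∈ H, χ u = 1) (fun χ => ∀ u ∈ N, χ u = 1)
  have hP : Nat.card {χ : (𝓞 K ⧸ Ideal.span {(p : 𝓞 K) ^ n})ˣ →* ℂˣ //
      ∀ u ∈ H, χ u = 1} = p ^ (n-1) * (p+1) := by
    rw [aux_card_trivial_on H, hHdef,
      aux_card_quot_range hdeg hp hinert n hn0 f (ZMod.castHom_injective _)]
  -- the sup subgroup
  set φ := (QuotientGroup.mk' H').comp redU with hφdef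
  have hker : MonoidHom.ker φ = H ⊔ N := by
    apply le_antisymm
    · intro u hu
      rw [MonoidHom.mem_ker, hφdef, MonoidHom.comp_apply, QuotientGroup.mk'_apply,
        QuotientGroup.eq_one_iff] at hu
      obtain ⟨m, hm⟩ := (aux_mem_H_iff hdeg hp hinert (n-1) hn1 f' (redU u)).mp hu
      by_cases hdvd : (p : ℤ) ∣ m
      · exfalso
        obtain ⟨c, rfl⟩ := hdvd
        have h2 : (((p : ℤ) * c : ℤ) : 𝓞 K) ∈ Ideal.span {(p : 𝓞 K)} := by
          rw [Ideal.mem_span_singleton]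
          exact ⟨(c : 𝓞 K), by push_cast; ring⟩
        have h3 : ((redU u : _) : 𝓞 K ⧸ Ideal.span {(p : 𝓞 K) ^ (n-1)}) ∈
            (Ideal.span {(p : 𝓞 K)}).map
              (Ideal.Quotient.mk (Ideal.span {(p : 𝓞 K) ^ (n-1)})) := by
          rw [hm]; exact Ideal.mem_map_of_mem _ h2
        exact (aux_isUnit_iff hp hinert (n-1) hn1 _).mp (redU u).isUnit h3
      · have hu2 : IsUnit ((m : ZMod (p ^ n))) := aux_isUnit_zmod hp hdvd
        have hwH : Units.map f.toMonoidHom hu2.unit ∈ H := ⟨hu2.unit, rfl⟩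
        have hwcoe : ((Units.map f.toMonoidHom hu2.unit : _) :
            𝓞 K ⧸ Ideal.span {(p : 𝓞 K) ^ n}) =
            Ideal.Quotient.mk (Ideal.span {(p : 𝓞 K) ^ n}) ((m : 𝓞 K)) := by
          have h1 : ((Units.map f.toMonoidHom hu2.unit : _) :
              𝓞 K ⧸ Ideal.span {(p : 𝓞 K) ^ n}) = f ((m : ZMod (p ^ n))) :=
            congrArg f hu2.unit_spec
          rw [h1, map_intCast]
          exact (map_intCast (Ideal.Quotient.mk (Ideal.span {(p : 𝓞 K) ^ n})) m).symm
        have hred_eq : redU (Units.map f.toMonoidHom hu2.unit) = redU u := by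
          refine Units.ext ?_
          show red ((Units.map f.toMonoidHom hu2.unit : _) :
            𝓞 K ⧸ Ideal.span {(p : 𝓞 K) ^ n}) = ((redU u : _) : _)
          rw [hwcoe, hreddef, Ideal.Quotient.factor_mk, ← hm]
        have hinN : (Units.map f.toMonoidHom hu2.unit)⁻¹ * u ∈ N := by
          rw [hNdef, MonoidHom.mem_ker, map_mul, map_inv, hred_eq, inv_mul_cancel]
        have hdecomp : u = (Units.map f.toMonoidHom hu2.unit) *
            ((Units.map f.toMonoidHom hu2.unit)⁻¹ * u) := (mul_inv_cancel_left _ _).symm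
        rw [hdecomp]
        exact Subgroup.mul_mem _ (SetLike.le_def.mp le_sup_left hwH) (SetLike.le_def.mp le_sup_right hinN)
    · refine sup_le ?_ ?_
      · rintro u hu
        rw [MonoidHom.mem_ker, hφdef, MonoidHom.comp_apply, QuotientGroup.mk'_apply,
          QuotientGroup.eq_one_iff]
        apply (aux_mem_H_iff hdeg hp hinert (n-1) hn1 f' _).mpr
        obtain ⟨m, hm⟩ := (aux_mem_H_iff hdeg hp hinert n hn0 f u).mp hu
        refine ⟨m, ?_⟩
        show red ((u : _) : 𝓞 K ⧸ Ideal.span {(p : 𝓞 K) ^ n}) = _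
        rw [hm, hreddef, Ideal.Quotient.factor_mk]
      · intro u hu
        rw [hNdef, MonoidHom.mem_ker] at hu
        rw [MonoidHom.mem_ker, hφdef, MonoidHom.comp_apply, hu, map_one]
  have hsurj : Function.Surjective φ :=
    (QuotientGroup.mk'_surjective H').comp
      (aux_red_surjective hp hinert n (n-1) hn1 (by omega) hle)
  have hPQ : Nat.card {χ : (𝓞 K ⧸ Ideal.span {(p : 𝓞 K) ^ n})ˣ →* ℂˣ //
      (∀ u ∈ H, χ u = 1) ∧ (∀ u ∈ N, χ u = 1)} = p ^ (n-2) * (p+1) := by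
    have hiff2 : ∀ χ : (𝓞 K ⧸ Ideal.span {(p : 𝓞 K) ^ n})ˣ →* ℂˣ,
        ((∀ u ∈ H, χ u = 1) ∧ (∀ u ∈ N, χ u = 1)) ↔ (∀ u ∈ H ⊔ N, χ u = 1) := by
      intro χ
      constructor
      · rintro ⟨h1, h2⟩ u hu
        have hle2 : H ⊔ N ≤ χ.ker := sup_le (fun x hx => h1 x hx) (fun x hx => h2 x hx)
        exact hle2 hu
      · intro h
        exact ⟨fun u hu => h u (SetLike.le_def.mp le_sup_left hu),
          fun u hu => h u (SetLike.le_def.mp le_sup_right hu)⟩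
    rw [Nat.card_congr (Equiv.subtypeEquivRight hiff2), aux_card_trivial_on (H ⊔ N), ← hker,
      Nat.card_congr (QuotientGroup.quotientKerEquivOfSurjective φ hsurj).toEquiv]
    have h9 : Nat.card ((𝓞 K ⧸ Ideal.span {(p : 𝓞 K) ^ (n-1)})ˣ ⧸ H')
        = p ^ ((n-1)-1) * (p+1) :=
      aux_card_quot_range hdeg hp hinert (n-1) hn1 f' (ZMod.castHom_injective _)
    rw [h9, show n - 1 - 1 = n - 2 from by omega]
  have harith := aux_arith2 hp.two_le hn
  omega
end

section
/- Let K be an imaginary quadratic field with ring of integers 𝒪_K, and let p be an odd rational prime that is split in K, with p𝒪_K = 𝔭·𝔭̄ for distinct prime ideals 𝔭 and 𝔭̄. Let t ≥ 1 and let χ be a character of (𝒪_K/p^t𝒪_K)^× that is trivial on rational integers. Suppose integers α, β with 0 ≤ α, β ≤ t are such that: χ is trivial on the kernel of the natural reduction map (𝒪_K/p^t𝒪_K)^× → (𝒪_K/𝔭^α𝔭̄^β)^×; if α ≥ 1 then χ is nontrivial on the kernel of the natural reduction map (𝒪_K/p^t𝒪_K)^× → (𝒪_K/𝔭^{α−1}𝔭̄^β)^×;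 and if β ≥ 1 then χ is nontrivial on the kernel of the natural reduction map (𝒪_K/p^t𝒪_K)^× → (𝒪_K/𝔭^α𝔭̄^{β−1})^×. Then α = β. -/
open NumberField

set_option maxHeartbeats 1000000
set_option synthInstance.maxHeartbeats 200000

theorem split_int_dvd
    (K : Type*) [Field K] [NumberField K]
    (p : ℕ) (hp : p.Prime)
    (P Pbar : Ideal (𝓞 K)) (hP : P.IsPrime) (hPbar : Pbar.IsPrime) (hne : P ≠ Pbar)
    (hsplit : Ideal.span {(p : 𝓞 K)} = P * Pbar) :
    ∀ (k : ℕ) (m : ℤ), (m : 𝓞 K) ∈ Pbar ^ k → (p : ℤ) ^ k ∣ m := by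
  have hp0 : (p : 𝓞 K) ≠ 0 := by exact_mod_cast (Nat.cast_ne_zero (R := 𝓞 K)).mpr hp.ne_zero
  have hspan_ne : Ideal.span {(p : 𝓞 K)} ≠ ⊥ := by
    simpa [Ideal.span_singleton_eq_bot] using hp0
  have hPbot : P ≠ ⊥ := by
    rintro rfl
    exact hspan_ne (le_bot_iff.mp (hsplit.le.trans Ideal.mul_le_left))
  have hPbarbot : Pbar ≠ ⊥ := by
    rintro rfl
    exact hspan_ne (le_bot_iff.mp (hsplit.le.trans Ideal.mul_le_right))
  have hPmax : P.IsMaximal := hP.isMaximal hPbot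
  have hPbarmax : Pbar.IsMaximal := hPbar.isMaximal hPbarbot
  have hcop : IsCoprime P Pbar :=
    Ideal.isCoprime_iff_sup_eq.mpr (hPmax.coprime_of_ne hPbarmax hne)
  have hpmem : (p : 𝓞 K) ∈ P * Pbar := by
    rw [← hsplit]; exact Ideal.mem_span_singleton_self _
  have hpP : (p : 𝓞 K) ∈ P := Ideal.mul_le_left hpmem
  have hpPbar : (p : 𝓞 K) ∈ Pbar := Ideal.mul_le_right hpmem
  intro k
  induction k with
  | zero => intro m _; simp
  | succ k ih =>
    intro m hm
    have hmPbar : (m : 𝓞 K) ∈ Pbar := Ideal.pow_le_self (Nat.succ_ne_zero k) hm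
    have hpm : (p : ℤ) ∣ m := by
      by_contra hnd
      have hcz : IsCoprime ((p : ℤ)) m :=
        (Nat.prime_iff_prime_int.mp hp).coprime_iff_not_dvd.mpr hnd
      obtain ⟨a, b, hab⟩ := hcz
      have h1 : (1 : 𝓞 K) ∈ Pbar := by
        have hmem : ((a : 𝓞 K) * (p : 𝓞 K) + (b : 𝓞 K) * (m : 𝓞 K)) ∈ Pbar :=
          Ideal.add_mem _ (Ideal.mul_mem_left _ _ hpPbar) (Ideal.mul_mem_left _ _ hmPbar)
        have heq : ((a : 𝓞 K) * (p : 𝓞 K) + (b : 𝓞 K) * (m : 𝓞 K)) = 1 := by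
          exact_mod_cast congrArg (fun z : ℤ => (z : 𝓞 K)) hab
        rwa [heq] at hmem
      exact hPbar.ne_top ((Ideal.eq_top_iff_one _).mpr h1)
    obtain ⟨m', rfl⟩ := hpm
    have hm' : (p : 𝓞 K) * (m' : 𝓞 K) ∈ Pbar ^ (k + 1) := by
      have h2 : (((p : ℤ) * m' : ℤ) : 𝓞 K) = (p : 𝓞 K) * (m' : 𝓞 K) := by push_cast; ring
      rwa [h2] at hm
    have hmemP : (p : 𝓞 K) * (m' : 𝓞 K) ∈ P := Ideal.mul_mem_right _ _ hpP
    have hco2 : IsCoprime P (Pbar ^ (k + 1)) := hcop.pow_right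
    have hinf : (p : 𝓞 K) * (m' : 𝓞 K) ∈ P * Pbar ^ (k + 1) := by
      rw [← Ideal.inf_eq_mul_of_isCoprime hco2]
      exact ⟨hmemP, hm'⟩
    have heqI : P * Pbar ^ (k + 1) = Ideal.span {(p : 𝓞 K)} * Pbar ^ k := by
      rw [hsplit]; ring
    rw [heqI, Ideal.mem_span_singleton_mul] at hinf
    obtain ⟨z, hz, hzeq⟩ := hinf
    have hz' : z = (m' : 𝓞 K) := mul_left_cancel₀ hp0 hzeq
    rw [hz'] at hz
    obtain ⟨c, hc⟩ := ih m' hz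
    exact ⟨c, by rw [pow_succ, hc]; ring⟩

theorem split_int_surj
    (K : Type*) [Field K] [NumberField K]
    (hdeg : Module.finrank ℚ K = 2)
    (p : ℕ) (hp : p.Prime)
    (P Pbar : Ideal (𝓞 K)) (hP : P.IsPrime) (hPbar : Pbar.IsPrime) (hne : P ≠ Pbar)
    (hsplit : Ideal.span {(p : 𝓞 K)} = P * Pbar) :
    ∀ (k : ℕ) (z : 𝓞 K ⧸ Pbar ^ k), ∃ m : ℤ,
      Ideal.Quotient.mk (Pbar ^ k) (m : 𝓞 K) = z := by
  have hp0 : (p : 𝓞 K) ≠ 0 := by exact_mod_cast (Nat.cast_ne_zero (R := 𝓞 K)).mpr hp.ne_zero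
  have hspan_ne : Ideal.span {(p : 𝓞 K)} ≠ ⊥ := by
    simpa [Ideal.span_singleton_eq_bot] using hp0
  have hPbarbot : Pbar ≠ ⊥ := by
    rintro rfl
    exact hspan_ne (le_bot_iff.mp (hsplit.le.trans Ideal.mul_le_right))
  have hpmem : (p : 𝓞 K) ∈ P * Pbar := by
    rw [← hsplit]; exact Ideal.mem_span_singleton_self _
  have hpPbar : (p : 𝓞 K) ∈ Pbar := Ideal.mul_le_right hpmem
  -- absNorm computations
  have hnorm : Ideal.absNorm (Ideal.span {(p : 𝓞 K)}) = p ^ 2 := by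
    rw [Ideal.absNorm_span_singleton]
    have h1 : (p : 𝓞 K) = algebraMap ℤ (𝓞 K) (p : ℤ) := by push_cast; ring
    rw [h1, Algebra.norm_algebraMap_of_basis (RingOfIntegers.basis K)]
    have h2 : Fintype.card (Module.Free.ChooseBasisIndex ℤ (𝓞 K)) = 2 := by
      rw [← Module.finrank_eq_card_chooseBasisIndex, RingOfIntegers.rank, hdeg]
    rw [h2]
    simp [Int.natAbs_pow]
  have hPP : Ideal.absNorm P * Ideal.absNorm Pbar = p ^ 2 := by
    rw [← _root_.map_mul Ideal.absNorm, ← hsplit, hnorm]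
  have hP1 : Ideal.absNorm P ≠ 1 :=
    fun h => hP.ne_top (Ideal.absNorm_eq_one_iff.mp h)
  have hPbar1 : Ideal.absNorm Pbar ≠ 1 :=
    fun h => hPbar.ne_top (Ideal.absNorm_eq_one_iff.mp h)
  have habs : Ideal.absNorm Pbar = p := by
    obtain ⟨i, hi, hieq⟩ := (Nat.dvd_prime_pow hp).mp
      (⟨Ideal.absNorm Pbar, hPP.symm⟩ : Ideal.absNorm P ∣ p ^ 2)
    obtain ⟨j, hj, hjeq⟩ := (Nat.dvd_prime_pow hp).mp
      (⟨Ideal.absNorm P, by rw [← hPP]; ring⟩ : Ideal.absNorm Pbar ∣ p ^ 2)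
    have hij : p ^ (i + j) = p ^ 2 := by
      rw [pow_add, ← hieq, ← hjeq, hPP]
    have hji : i + j = 2 := Nat.pow_right_injective hp.two_le hij
    have hi0 : i ≠ 0 := by rintro rfl; exact hP1 (by simpa using hieq)
    have hj0 : j ≠ 0 := by rintro rfl; exact hPbar1 (by simpa using hjeq)
    have hj1 : j = 1 := by omega
    rw [hjeq, hj1, pow_one]
  intro k z
  haveI : Fintype (𝓞 K ⧸ Pbar ^ k) :=
    @Fintype.ofFinite _ (Ideal.finiteQuotientOfFreeOfNeBot _ (pow_ne_zero k (by simpa using hPbarbot)))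
  have hcard : Nat.card (𝓞 K ⧸ Pbar ^ k) = p ^ k := by
    rw [← Submodule.cardQuot_apply, ← Ideal.absNorm_apply, map_pow, habs]
  have hnsmul : (p ^ k) • (1 : 𝓞 K ⧸ Pbar ^ k) = 0 := by
    rw [nsmul_eq_mul, mul_one]
    have h3 : ((p ^ k : ℕ) : 𝓞 K ⧸ Pbar ^ k) =
        Ideal.Quotient.mk (Pbar ^ k) ((p ^ k : ℕ) : 𝓞 K) := by
      rw [map_natCast]
    rw [h3, Ideal.Quotient.eq_zero_iff_mem]
    exact_mod_cast Ideal.pow_mem_pow hpPbar k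
  have horder : addOrderOf (1 : 𝓞 K ⧸ Pbar ^ k) = p ^ k := by
    have hd1 : addOrderOf (1 : 𝓞 K ⧸ Pbar ^ k) ∣ p ^ k :=
      addOrderOf_dvd_of_nsmul_eq_zero hnsmul
    have hd2 : p ^ k ∣ addOrderOf (1 : 𝓞 K ⧸ Pbar ^ k) := by
      have h4 : addOrderOf (1 : 𝓞 K ⧸ Pbar ^ k) • (1 : 𝓞 K ⧸ Pbar ^ k) = 0 :=
        addOrderOf_nsmul_eq_zero 1
      rw [nsmul_eq_mul, mul_one] at h4
      have hdmem : (((addOrderOf (1 : 𝓞 K ⧸ Pbar ^ k)) : ℤ) : 𝓞 K) ∈ Pbar ^ k := by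
        rw [← Ideal.Quotient.eq_zero_iff_mem]
        have h5 : Ideal.Quotient.mk (Pbar ^ k)
            (((addOrderOf (1 : 𝓞 K ⧸ Pbar ^ k)) : ℤ) : 𝓞 K) =
            ((addOrderOf (1 : 𝓞 K ⧸ Pbar ^ k) : ℕ) : 𝓞 K ⧸ Pbar ^ k) := by
          push_cast
          rw [map_natCast]
        rw [h5, h4]
      have h6 := split_int_dvd K p hp P Pbar hP hPbar hne hsplit k _ hdmem
      exact_mod_cast h6
    exact Nat.dvd_antisymm hd1 hd2
  have htop : AddSubgroup.zmultiples (1 : 𝓞 K ⧸ Pbar ^ k) = ⊤ :=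
    AddSubgroup.eq_top_of_card_eq _ (by rw [Nat.card_zmultiples, horder, hcard])
  have hz : z ∈ AddSubgroup.zmultiples (1 : 𝓞 K ⧸ Pbar ^ k) := by
    rw [htop]; trivial
  obtain ⟨m, hm⟩ := AddSubgroup.mem_zmultiples_iff.mp hz
  refine ⟨m, ?_⟩
  rw [map_intCast (Ideal.Quotient.mk (Pbar ^ k)) m, ← hm, zsmul_eq_mul, mul_one]


theorem split_key
    (K : Type*) [Field K] [NumberField K]
    (hdeg : Module.finrank ℚ K = 2)
    (p : ℕ) (hp : p.Prime)
    (P Pbar : Ideal (𝓞 K)) (hP : P.IsPrime) (hPbar : Pbar.IsPrime) (hne : P ≠ Pbar)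
    (hsplit : Ideal.span {(p : 𝓞 K)} = P * Pbar)
    (t : ℕ) (ht : 1 ≤ t)
    (χ : (𝓞 K ⧸ Ideal.span {(p : 𝓞 K) ^ t})ˣ →* ℂˣ)
    (htriv : ∀ u : (𝓞 K ⧸ Ideal.span {(p : 𝓞 K) ^ t})ˣ,
      (∃ m : ℤ, (u : 𝓞 K ⧸ Ideal.span {(p : 𝓞 K) ^ t}) =
        Ideal.Quotient.mk (Ideal.span {(p : 𝓞 K) ^ t}) (m : 𝓞 K)) →
      χ u = 1)
    (α β : ℕ) (hα : α ≤ t) (hβ : β ≤ t)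
    (h1 : ∀ (u : (𝓞 K ⧸ Ideal.span {(p : 𝓞 K) ^ t})ˣ) (x : 𝓞 K),
      Ideal.Quotient.mk (Ideal.span {(p : 𝓞 K) ^ t}) x =
        (u : 𝓞 K ⧸ Ideal.span {(p : 𝓞 K) ^ t}) →
      Ideal.Quotient.mk (P ^ α * Pbar ^ β) x = 1 → χ u = 1)
    (h3 : 1 ≤ β → ∃ (u : (𝓞 K ⧸ Ideal.span {(p : 𝓞 K) ^ t})ˣ) (x : 𝓞 K),
      Ideal.Quotient.mk (Ideal.span {(p : 𝓞 K) ^ t}) x =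
        (u : 𝓞 K ⧸ Ideal.span {(p : 𝓞 K) ^ t}) ∧
      Ideal.Quotient.mk (P ^ α * Pbar ^ (β - 1)) x = 1 ∧ χ u ≠ 1)
    (hlt : α < β) : False := by
  have hβ1 : 1 ≤ β := Nat.lt_of_le_of_lt (Nat.zero_le α) hlt
  obtain ⟨u, x, hx, hx1, hχ⟩ := h3 hβ1
  apply hχ
  -- basic setup
  have hp0 : (p : 𝓞 K) ≠ 0 := by exact_mod_cast (Nat.cast_ne_zero (R := 𝓞 K)).mpr hp.ne_zero
  have hspan_ne : Ideal.span {(p : 𝓞 K)} ≠ ⊥ := by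
    simpa [Ideal.span_singleton_eq_bot] using hp0
  have hPbot : P ≠ ⊥ := by
    rintro rfl
    exact hspan_ne (le_bot_iff.mp (hsplit.le.trans Ideal.mul_le_left))
  have hPbarbot : Pbar ≠ ⊥ := by
    rintro rfl
    exact hspan_ne (le_bot_iff.mp (hsplit.le.trans Ideal.mul_le_right))
  have hPmax : P.IsMaximal := hP.isMaximal hPbot
  have hPbarmax : Pbar.IsMaximal := hPbar.isMaximal hPbarbot
  have hcop : IsCoprime P Pbar :=
    Ideal.isCoprime_iff_sup_eq.mpr (hPmax.coprime_of_ne hPbarmax hne)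
  have hpmem : (p : 𝓞 K) ∈ P * Pbar := by
    rw [← hsplit]; exact Ideal.mem_span_singleton_self _
  have hpP : (p : 𝓞 K) ∈ P := Ideal.mul_le_left hpmem
  have hpPbar : (p : 𝓞 K) ∈ Pbar := Ideal.mul_le_right hpmem
  have hdvd := split_int_dvd K p hp P Pbar hP hPbar hne hsplit
  have hspanP : ∀ γ : ℕ, γ ≤ t → Ideal.span {(p : 𝓞 K) ^ t} ≤ P ^ γ := by
    intro γ hγ
    rw [Ideal.span_singleton_le_iff_mem]
    exact Ideal.pow_le_pow_right hγ (Ideal.pow_mem_pow hpP t)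
  have hspanPbar : ∀ γ : ℕ, γ ≤ t → Ideal.span {(p : 𝓞 K) ^ t} ≤ Pbar ^ γ := by
    intro γ hγ
    rw [Ideal.span_singleton_le_iff_mem]
    exact Ideal.pow_le_pow_right hγ (Ideal.pow_mem_pow hpPbar t)
  -- from hx1 : x ≡ 1 mod P^α * Pbar^(β-1)
  have hx1' : x - 1 ∈ P ^ α * Pbar ^ (β - 1) := by
    rw [← Ideal.Quotient.mk_eq_mk_iff_sub_mem, map_one]
    exact hx1
  have hxP : x - 1 ∈ P ^ α := Ideal.mul_le_left hx1'
  have hxPbar1 : x - 1 ∈ Pbar ^ (β - 1) := Ideal.mul_le_right hx1'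
  -- an integer n congruent to x mod Pbar^β
  obtain ⟨n, hn⟩ := split_int_surj K hdeg p hp P Pbar hP hPbar hne hsplit β
    (Ideal.Quotient.mk (Pbar ^ β) x)
  have hnx : (n : 𝓞 K) - x ∈ Pbar ^ β := by
    rw [← Ideal.Quotient.mk_eq_mk_iff_sub_mem]
    exact hn
  -- x is not in Pbar (it lifts a unit)
  obtain ⟨z, hz⟩ := Ideal.Quotient.mk_surjective
    ((u⁻¹ : (𝓞 K ⧸ Ideal.span {(p : 𝓞 K) ^ t})ˣ) : 𝓞 K ⧸ Ideal.span {(p : 𝓞 K) ^ t})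
  have hxz : x * z - 1 ∈ Ideal.span {(p : 𝓞 K) ^ t} := by
    rw [← Ideal.Quotient.mk_eq_mk_iff_sub_mem, map_one, map_mul, hx, hz]
    exact u.mul_inv
  have hxnotin : x ∉ Pbar := by
    intro hmem
    apply hPbar.ne_top
    rw [Ideal.eq_top_iff_one]
    have hxz' : x * z - 1 ∈ Pbar := by
      have h7 := hspanPbar 1 ht hxz; simpa using h7
    have h8 : (1 : 𝓞 K) = x * z - (x * z - 1) := by ring
    rw [h8]
    exact Ideal.sub_mem _ (Ideal.mul_mem_right _ _ hmem) hxz'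
  -- p does not divide n
  have hpn : ¬ (p : ℤ) ∣ n := by
    rintro ⟨c, hc⟩
    apply hxnotin
    have hnPbar : (n : 𝓞 K) ∈ Pbar := by
      have h9 : (n : 𝓞 K) = (p : 𝓞 K) * (c : 𝓞 K) := by rw [hc]; push_cast; ring
      rw [h9]
      exact Ideal.mul_mem_right _ _ hpPbar
    have h10 : x = (n : 𝓞 K) - ((n : 𝓞 K) - x) := by ring
    rw [h10]
    exact Ideal.sub_mem _ hnPbar (Ideal.pow_le_self (by omega) hnx)
  -- inverse of n modulo p^t
  obtain ⟨a, b, hab⟩ :=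
    ((((Nat.prime_iff_prime_int.mp hp).coprime_iff_not_dvd.mpr hpn)).pow_left : IsCoprime ((p : ℤ) ^ t) n)
  have hbn : (b : 𝓞 K) * (n : 𝓞 K) - 1 ∈ Ideal.span {(p : 𝓞 K) ^ t} := by
    have h11 : (b : 𝓞 K) * (n : 𝓞 K) - 1 = -((a : 𝓞 K)) * (p : 𝓞 K) ^ t := by
      have h12 := congrArg (fun w : ℤ => (w : 𝓞 K)) hab
      push_cast at h12 ⊢
      linear_combination h12
    rw [h11]
    exact Ideal.mul_mem_left _ _ (Ideal.mem_span_singleton_self _)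
  -- the unit given by b
  have hmkbn : Ideal.Quotient.mk (Ideal.span {(p : 𝓞 K) ^ t}) (b : 𝓞 K) *
      Ideal.Quotient.mk (Ideal.span {(p : 𝓞 K) ^ t}) (n : 𝓞 K) = 1 := by
    rw [← map_mul, ← map_one (Ideal.Quotient.mk (Ideal.span {(p : 𝓞 K) ^ t})),
      Ideal.Quotient.mk_eq_mk_iff_sub_mem]
    exact hbn
  set v : (𝓞 K ⧸ Ideal.span {(p : 𝓞 K) ^ t})ˣ :=
    ⟨Ideal.Quotient.mk _ (b : 𝓞 K), Ideal.Quotient.mk _ (n : 𝓞 K), hmkbn,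
      by rw [mul_comm] at hmkbn; exact hmkbn⟩ with hv
  have hχv : χ v = 1 := htriv v ⟨b, rfl⟩
  -- n ≡ 1 mod P^α
  have hn1 : (n : 𝓞 K) - 1 ∈ P ^ α := by
    have h13 : (n : 𝓞 K) - 1 ∈ Pbar ^ (β - 1) := by
      have h14 : (n : 𝓞 K) - 1 = ((n : 𝓞 K) - x) + (x - 1) := by ring
      rw [h14]
      exact Ideal.add_mem _ (Ideal.pow_le_pow_right (Nat.sub_le β 1) hnx) hxPbar1
    have h15 : ((n - 1 : ℤ) : 𝓞 K) ∈ Pbar ^ (β - 1) := by push_cast; exact h13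
    obtain ⟨c, hc⟩ := hdvd (β - 1) (n - 1) h15
    have h16 : (n : 𝓞 K) - 1 = (p : 𝓞 K) ^ (β - 1) * (c : 𝓞 K) := by
      have := congrArg (fun w : ℤ => (w : 𝓞 K)) hc
      push_cast at this ⊢
      linear_combination this
    rw [h16]
    exact Ideal.pow_le_pow_right (by omega)
      (Ideal.mul_mem_right _ _ (Ideal.pow_mem_pow hpP (β - 1)))
  -- b ≡ 1 mod P^α
  have hb1 : (b : 𝓞 K) - 1 ∈ P ^ α := by
    have h17 : (b : 𝓞 K) - 1 =
        ((b : 𝓞 K) * (n : 𝓞 K) - 1) - (b : 𝓞 K) * ((n : 𝓞 K) - 1) := by ring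
    rw [h17]
    exact Ideal.sub_mem _ (hspanP α hα hbn) (Ideal.mul_mem_left _ _ hn1)
  -- x * b ≡ 1 mod P^α * Pbar^β
  have hyP : x * (b : 𝓞 K) - 1 ∈ P ^ α := by
    have h18 : x * (b : 𝓞 K) - 1 = (x - 1) * (b : 𝓞 K) + ((b : 𝓞 K) - 1) := by ring
    rw [h18]
    exact Ideal.add_mem _ (Ideal.mul_mem_right _ _ hxP) hb1
  have hyPbar : x * (b : 𝓞 K) - 1 ∈ Pbar ^ β := by
    have h19 : x * (b : 𝓞 K) - 1 =
        ((b : 𝓞 K) * (n : 𝓞 K) - 1) - ((n : 𝓞 K) - x) * (b : 𝓞 K) := by ring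
    rw [h19]
    exact Ideal.sub_mem _ (hspanPbar β hβ hbn) (Ideal.mul_mem_right _ _ hnx)
  have hy : Ideal.Quotient.mk (P ^ α * Pbar ^ β) (x * (b : 𝓞 K)) = 1 := by
    rw [← map_one (Ideal.Quotient.mk (P ^ α * Pbar ^ β)),
      Ideal.Quotient.mk_eq_mk_iff_sub_mem,
      ← Ideal.inf_eq_mul_of_isCoprime (hcop.pow (m := α) (n := β))]
    exact ⟨hyP, hyPbar⟩
  -- conclude
  have hw : χ (u * v) = 1 := by
    apply h1 (u * v) (x * (b : 𝓞 K)) _ hy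
    rw [map_mul, hx]
    rfl
  rw [map_mul, hχv, mul_one] at hw
  exact hw


/-- Let `K` be an imaginary quadratic field and `p` an odd rational prime that is split
in `K`, with `p 𝓞 K = 𝔭 · 𝔭̄` for distinct prime ideals `𝔭`, `𝔭̄`. Let `t ≥ 1` and let
`χ` be a character of `(𝓞 K / p^t 𝓞 K)ˣ` that is trivial on rational integers. Suppose
`0 ≤ α, β ≤ t` are such that `χ` is trivial on the kernel of the reduction to
`(𝓞 K / 𝔭^α 𝔭̄^β)ˣ`, and (if `α ≥ 1`, resp. `β ≥ 1`) nontrivial on the kernel of the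
reduction to `(𝓞 K / 𝔭^(α−1) 𝔭̄^β)ˣ`, resp. `(𝓞 K / 𝔭^α 𝔭̄^(β−1))ˣ`. Then `α = β`.
(A unit `u` lies in the kernel of the reduction modulo an ideal `J ⊇ p^t 𝓞 K` exactly
when some (equivalently, any) lift `x ∈ 𝓞 K` of `u` reduces to `1` modulo `J`.) -/
theorem conductor_exponents_balanced_split
    (K : Type*) [Field K] [NumberField K]
    (hdeg : Module.finrank ℚ K = 2) (himag : IsEmpty (K →+* ℝ))
    (p : ℕ) (hp : p.Prime) (hp2 : p ≠ 2)
    (P Pbar : Ideal (𝓞 K)) (hP : P.IsPrime) (hPbar : Pbar.IsPrime) (hne : P ≠ Pbar)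
    (hsplit : Ideal.span {(p : 𝓞 K)} = P * Pbar)
    (t : ℕ) (ht : 1 ≤ t)
    (χ : (𝓞 K ⧸ Ideal.span {(p : 𝓞 K) ^ t})ˣ →* ℂˣ)
    (htriv : ∀ u : (𝓞 K ⧸ Ideal.span {(p : 𝓞 K) ^ t})ˣ,
      (∃ m : ℤ, (u : 𝓞 K ⧸ Ideal.span {(p : 𝓞 K) ^ t}) =
        Ideal.Quotient.mk (Ideal.span {(p : 𝓞 K) ^ t}) (m : 𝓞 K)) →
      χ u = 1)
    (α β : ℕ) (hα : α ≤ t) (hβ : β ≤ t)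
    (h1 : ∀ (u : (𝓞 K ⧸ Ideal.span {(p : 𝓞 K) ^ t})ˣ) (x : 𝓞 K),
      Ideal.Quotient.mk (Ideal.span {(p : 𝓞 K) ^ t}) x =
        (u : 𝓞 K ⧸ Ideal.span {(p : 𝓞 K) ^ t}) →
      Ideal.Quotient.mk (P ^ α * Pbar ^ β) x = 1 → χ u = 1)
    (h2 : 1 ≤ α → ∃ (u : (𝓞 K ⧸ Ideal.span {(p : 𝓞 K) ^ t})ˣ) (x : 𝓞 K),
      Ideal.Quotient.mk (Ideal.span {(p : 𝓞 K) ^ t}) x =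
        (u : 𝓞 K ⧸ Ideal.span {(p : 𝓞 K) ^ t}) ∧
      Ideal.Quotient.mk (P ^ (α - 1) * Pbar ^ β) x = 1 ∧ χ u ≠ 1)
    (h3 : 1 ≤ β → ∃ (u : (𝓞 K ⧸ Ideal.span {(p : 𝓞 K) ^ t})ˣ) (x : 𝓞 K),
      Ideal.Quotient.mk (Ideal.span {(p : 𝓞 K) ^ t}) x =
        (u : 𝓞 K ⧸ Ideal.span {(p : 𝓞 K) ^ t}) ∧
      Ideal.Quotient.mk (P ^ α * Pbar ^ (β - 1)) x = 1 ∧ χ u ≠ 1) :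
    α = β := by
  rcases Nat.lt_trichotomy α β with h | h | h
  · exact (split_key K hdeg p hp P Pbar hP hPbar hne hsplit t ht χ htriv
      α β hα hβ h1 h3 h).elim
  · exact h
  · refine (split_key K hdeg p hp Pbar P hPbar hP hne.symm
      (by rw [hsplit, mul_comm]) t ht χ htriv β α hβ hα ?_ ?_ h).elim
    · intro u x hux hmk
      exact h1 u x hux (by rwa [mul_comm (Pbar ^ β) (P ^ α)] at hmk)
    · intro hh
      obtain ⟨u, x, hux, hmk, hchi⟩ := h2 hh
      exact ⟨u, x, hux, by rwa [mul_comm (P ^ (α - 1)) (Pbar ^ β)] at hmk, hchi⟩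
end

section
/- Let K be an imaginary quadratic field with ring of integers 𝒪_K, let p be an odd rational prime that is split in K (i.e. p𝒪_K = 𝔭·𝔭̄ for distinct prime ideals 𝔭, 𝔭̄), and let n ≥ 2 be an integer. Then the number of characters of (𝒪_K/p^n𝒪_K)^× that are trivial on rational integers and nontrivial on the kernel of the natural reduction map (𝒪_K/p^n𝒪_K)^× → (𝒪_K/p^{n−1}𝒪_K)^× equals p^{n−2}(p − 1)². -/
open NumberField




private lemma card_monoidHom_complex (G : Type*) [CommGroup G] [Finite G] :
    Nat.card (G →* ℂˣ) = Nat.card G := by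
  haveI : NeZero ((Monoid.exponent G : ℂ)) :=
    ⟨Nat.cast_ne_zero.mpr (Monoid.exponent_ne_zero_of_finite (G := G))⟩
  exact Nat.card_congr (CommGroup.monoidHom_mulEquiv_of_hasEnoughRootsOfUnity G ℂ).some.toEquiv

private lemma finite_monoidHom_complex (G : Type*) [CommGroup G] [Finite G] :
    Finite (G →* ℂˣ) := by
  haveI : NeZero ((Monoid.exponent G : ℂ)) :=
    ⟨Nat.cast_ne_zero.mpr (Monoid.exponent_ne_zero_of_finite (G := G))⟩
  exact Finite.of_equiv G (CommGroup.monoidHom_mulEquiv_of_hasEnoughRootsOfUnity G ℂ).some.toEquiv.symm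

private def charQuotEquiv {G : Type*} [CommGroup G] (H : Subgroup G) :
    {χ : G →* ℂˣ // ∀ h ∈ H, χ h = 1} ≃ ((G ⧸ H) →* ℂˣ) where
  toFun χ := QuotientGroup.lift H χ.1 (fun h hh => χ.2 h hh)
  invFun ψ := ⟨ψ.comp (QuotientGroup.mk' H), fun h hh => by
    simp [(QuotientGroup.eq_one_iff h).mpr hh]⟩
  left_inv χ := Subtype.ext (MonoidHom.ext fun g => rfl)
  right_inv ψ := MonoidHom.ext fun g => by
    obtain ⟨x, rfl⟩ := QuotientGroup.mk_surjective g
    rfl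

private lemma card_chars_sub {G : Type*} [CommGroup G] [Finite G] (H : Subgroup G) :
    Nat.card {χ : G →* ℂˣ // ∀ h ∈ H, χ h = 1} = H.index := by
  rw [Nat.card_congr (charQuotEquiv H), card_monoidHom_complex, Subgroup.index_eq_card]

private lemma card_chars_diff {G : Type*} [CommGroup G] [Finite G] (H K : Subgroup G) :
    Nat.card {χ : G →* ℂˣ // (∀ h ∈ H, χ h = 1) ∧ ∃ k ∈ K, χ k ≠ 1}
      = H.index - (H ⊔ K).index := by
  haveI := finite_monoidHom_complex G
  have hsup : ∀ χ : G →* ℂˣ, (∀ h ∈ H ⊔ K, χ h = 1) ↔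
      (∀ h ∈ H, χ h = 1) ∧ (∀ k ∈ K, χ k = 1) := by
    intro χ
    constructor
    · exact fun h => ⟨fun x hx => h x (Subgroup.mem_sup_left hx),
        fun x hx => h x (Subgroup.mem_sup_right hx)⟩
    · rintro ⟨h1, h2⟩ x hx
      have hle : H ⊔ K ≤ χ.ker := sup_le (fun y hy => (MonoidHom.mem_ker).mpr (h1 y hy))
        (fun y hy => (MonoidHom.mem_ker).mpr (h2 y hy))
      exact (MonoidHom.mem_ker).mp (hle hx)
  have hset : {χ : G →* ℂˣ | (∀ h ∈ H, χ h = 1) ∧ ∃ k ∈ K, χ k ≠ 1}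
      = {χ : G →* ℂˣ | ∀ h ∈ H, χ h = 1} \ {χ : G →* ℂˣ | ∀ h ∈ H ⊔ K, χ h = 1} := by
    ext χ
    simp only [Set.mem_setOf_eq, Set.mem_diff, hsup χ, not_and]
    constructor
    · rintro ⟨h1, k, hk, hk1⟩
      exact ⟨h1, fun _ h => hk1 (h k hk)⟩
    · rintro ⟨h1, h2⟩
      refine ⟨h1, ?_⟩
      by_contra hcon
      push_neg at hcon
      exact h2 h1 hcon
  have hsub : {χ : G →* ℂˣ | ∀ h ∈ H ⊔ K, χ h = 1} ⊆ {χ : G →* ℂˣ | ∀ h ∈ H, χ h = 1} :=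
    fun χ hχ => ((hsup χ).mp hχ).1
  calc Nat.card {χ : G →* ℂˣ // (∀ h ∈ H, χ h = 1) ∧ ∃ k ∈ K, χ k ≠ 1}
      = ({χ : G →* ℂˣ | (∀ h ∈ H, χ h = 1) ∧ ∃ k ∈ K, χ k ≠ 1}).ncard := by
        rw [← Nat.card_coe_set_eq]; rfl
    _ = ({χ : G →* ℂˣ | ∀ h ∈ H, χ h = 1} \ {χ : G →* ℂˣ | ∀ h ∈ H ⊔ K, χ h = 1}).ncard := by
        rw [hset]
    _ = ({χ : G →* ℂˣ | ∀ h ∈ H, χ h = 1}).ncard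
        - ({χ : G →* ℂˣ | ∀ h ∈ H ⊔ K, χ h = 1}).ncard := Set.ncard_diff hsub (Set.toFinite _)
    _ = H.index - (H ⊔ K).index := by
        rw [← Nat.card_coe_set_eq, ← Nat.card_coe_set_eq]
        have e1 := card_chars_sub (G := G) H
        have e2 := card_chars_sub (G := G) (H ⊔ K)
        rw [← e1, ← e2]; rfl


private lemma natCast_dvd_natCast_zmod {N M : ℕ} [NeZero N] (hd : M ∣ N) (k : ℕ) :
    (M : ZMod N) ∣ (k : ZMod N) ↔ M ∣ k := by
  constructor
  · rintro ⟨c, hc⟩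
    obtain ⟨t, rfl⟩ : ∃ t : ℕ, (t : ZMod N) = c := ⟨c.val, ZMod.natCast_rightInverse c⟩
    rw [← Nat.cast_mul, ZMod.natCast_eq_natCast_iff] at hc
    have h2 : k ≡ M * t [MOD M] := hc.of_dvd hd
    have h0 : M * t ≡ 0 [MOD M] := Nat.modEq_zero_iff_dvd.mpr ⟨t, rfl⟩
    exact Nat.modEq_zero_iff_dvd.mp (h2.trans h0)
  · rintro ⟨c, rfl⟩
    exact ⟨(c : ZMod N), by push_cast; ring⟩

private lemma castHom_eq_one_iff {N M : ℕ} [NeZero N] (hd : M ∣ N) (x : ZMod N) :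
    (ZMod.castHom hd (ZMod M)) x = 1 ↔ (M : ZMod N) ∣ x - 1 := by
  obtain ⟨k, hk⟩ : ∃ k : ℕ, (k : ZMod N) = x - 1 := ⟨(x-1).val, ZMod.natCast_rightInverse _⟩
  have hx : x = (k : ZMod N) + 1 := by rw [hk]; ring
  subst hx
  rw [add_sub_cancel_right, map_add, map_natCast, map_one, natCast_dvd_natCast_zmod hd]
  rw [add_eq_right]
  exact (ZMod.natCast_eq_zero_iff k M)

private lemma mem_unitsKer_iff {N M : ℕ} [NeZero N] (hd : M ∣ N) (w : (ZMod N)ˣ) :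
    w ∈ (ZMod.unitsMap hd).ker ↔ (M : ZMod N) ∣ (w : ZMod N) - 1 := by
  rw [MonoidHom.mem_ker, Units.ext_iff]
  simp only [ZMod.unitsMap, Units.coe_map, MonoidHom.coe_coe, Units.val_one]
  exact castHom_eq_one_iff hd _

private lemma zmod_count (p n : ℕ) (hp : p.Prime) (hn : 2 ≤ n) :
    Nat.card {χ : (ZMod (p^n))ˣ × (ZMod (p^n))ˣ →* ℂˣ //
      (∀ w : (ZMod (p^n))ˣ × (ZMod (p^n))ˣ, w.1 = w.2 → χ w = 1) ∧
      ∃ w : (ZMod (p^n))ˣ × (ZMod (p^n))ˣ,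
        (((p^(n-1) : ℕ) : ZMod (p^n)) ∣ (w.1 : ZMod (p^n)) - 1 ∧
         ((p^(n-1) : ℕ) : ZMod (p^n)) ∣ (w.2 : ZMod (p^n)) - 1) ∧ χ w ≠ 1} =
    p ^ (n - 2) * (p - 1) ^ 2 := by
  haveI : NeZero (p ^ n) := ⟨pow_ne_zero _ hp.pos.ne'⟩
  haveI : NeZero (p ^ (n-1)) := ⟨pow_ne_zero _ hp.pos.ne'⟩
  set U := (ZMod (p^n))ˣ
  have hdvd : p^(n-1) ∣ p^n := pow_dvd_pow p (Nat.sub_le n 1)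
  set g : U × U →* U := (MonoidHom.fst U U) / (MonoidHom.snd U U) with hg
  have hgapp : ∀ w : U × U, g w = w.1 / w.2 := fun w => rfl
  set K₁ : Subgroup U := (ZMod.unitsMap hdvd).ker with hK₁
  set H : Subgroup (U × U) := g.ker with hH
  set K : Subgroup (U × U) := K₁.prod K₁ with hK
  have hmemH : ∀ w : U × U, w ∈ H ↔ w.1 = w.2 := by
    intro w
    rw [hH, MonoidHom.mem_ker, hgapp, div_eq_one]
  have hmemK : ∀ w : U × U, w ∈ K ↔
      (((p^(n-1) : ℕ) : ZMod (p^n)) ∣ (w.1 : ZMod (p^n)) - 1 ∧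
       ((p^(n-1) : ℕ) : ZMod (p^n)) ∣ (w.2 : ZMod (p^n)) - 1) := by
    intro w
    rw [hK, Subgroup.mem_prod, mem_unitsKer_iff hdvd, mem_unitsKer_iff hdvd]
  have hcongr : Nat.card {χ : U × U →* ℂˣ //
      (∀ w : U × U, w.1 = w.2 → χ w = 1) ∧
      ∃ w : U × U,
        (((p^(n-1) : ℕ) : ZMod (p^n)) ∣ (w.1 : ZMod (p^n)) - 1 ∧
         ((p^(n-1) : ℕ) : ZMod (p^n)) ∣ (w.2 : ZMod (p^n)) - 1) ∧ χ w ≠ 1} =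
      Nat.card {χ : U × U →* ℂˣ // (∀ h ∈ H, χ h = 1) ∧ ∃ k ∈ K, χ k ≠ 1} := by
    apply Nat.card_congr
    apply Equiv.subtypeEquivRight
    intro χ
    constructor
    · rintro ⟨h1, w, hw, hw1⟩
      exact ⟨fun h hh => h1 h ((hmemH h).mp hh), w, (hmemK w).mpr hw, hw1⟩
    · rintro ⟨h1, w, hw, hw1⟩
      exact ⟨fun h hh => h1 h ((hmemH h).mpr hh), w, (hmemK w).mp hw, hw1⟩
  rw [hcongr, card_chars_diff]
  -- compute indices
  have hgsurj : Function.Surjective g := fun v => ⟨(v, 1), by rw [hgapp]; simp⟩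
  have hHidx : H.index = Nat.card U := by
    rw [hH, Subgroup.index_eq_card,
      Nat.card_congr (QuotientGroup.quotientKerEquivOfSurjective g hgsurj).toEquiv]
  have hsup : H ⊔ K = K₁.comap g := by
    apply le_antisymm
    · refine sup_le ?_ ?_
      · intro w hw
        rw [hH, MonoidHom.mem_ker] at hw
        rw [Subgroup.mem_comap, hw]
        exact one_mem _
      · intro w hw
        rw [hK, Subgroup.mem_prod] at hw
        rw [Subgroup.mem_comap, hgapp]
        exact div_mem hw.1 hw.2
    · intro w hw
      rw [Subgroup.mem_comap, hgapp] at hw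
      have hdc : w = (w.2, w.2) * (w.1 / w.2, 1) := by
        apply Prod.ext <;> simp
      rw [hdc]
      refine mul_mem (Subgroup.mem_sup_left ?_) (Subgroup.mem_sup_right ?_)
      · rw [hmemH]
      · rw [hK, Subgroup.mem_prod]
        exact ⟨hw, one_mem _⟩
  have hKidx : (H ⊔ K).index = Nat.card (ZMod (p^(n-1)))ˣ := by
    rw [hsup, Subgroup.index_comap_of_surjective _ hgsurj, hK₁, Subgroup.index_eq_card,
      Nat.card_congr (QuotientGroup.quotientKerEquivOfSurjective _
        (ZMod.unitsMap_surjective hdvd)).toEquiv]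
  rw [hHidx, hKidx]
  have c1 : Nat.card U = (p^n).totient := by
    rw [Nat.card_eq_fintype_card, ZMod.card_units_eq_totient]
  have c2 : Nat.card (ZMod (p^(n-1)))ˣ = (p^(n-1)).totient := by
    rw [Nat.card_eq_fintype_card, ZMod.card_units_eq_totient]
  rw [c1, c2, Nat.totient_prime_pow hp (by omega : 0 < n),
    Nat.totient_prime_pow hp (by omega : 0 < n - 1)]
  have h1 : p^(n-1) = p^(n-2) * p := by rw [← pow_succ]; congr 1; omega
  have h2 : n - 1 - 1 = n - 2 := by omega
  rw [h1, h2]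
  obtain ⟨q, hq⟩ : ∃ q, p = q + 1 := ⟨p - 1, by have := hp.pos; omega⟩
  subst hq
  rw [Nat.add_sub_cancel]
  have h3 : (q+1)^(n-2) * (q+1) * q = (q+1)^(n-2) * q^2 + (q+1)^(n-2) * q := by ring
  rw [h3, Nat.add_sub_cancel]


private lemma key_mem_pow {A : Type*} [CommRing A] [IsDedekindDomain A]
    {p : ℕ} (hp : p.Prime) {P Pbar : Ideal A} (hP : P.IsPrime) (hPbar : Pbar.IsPrime)
    (hne : P ≠ Pbar) (hPbot : P ≠ ⊥) (hPbarbot : Pbar ≠ ⊥)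
    (hsplit : Ideal.span {(p : A)} = P * Pbar) (n : ℕ) (k : ℕ) :
    (k : A) ∈ P ^ n ↔ p ^ n ∣ k := by
  have hpP : (p : A) ∈ P := by
    have hle : Ideal.span {(p:A)} ≤ P := by rw [hsplit]; exact Ideal.mul_le_left
    exact hle (Ideal.subset_span rfl)
  constructor
  · intro hk
    rcases Nat.eq_zero_or_pos k with rfl | hk0
    · exact dvd_zero _
    set a := k.factorization p with ha
    set m := k / p ^ a with hm
    have hkeq : p ^ a * m = k := Nat.ordProj_mul_ordCompl_eq_self k p
    have hmnd : ¬ p ∣ m := Nat.not_dvd_ordCompl hp hk0.ne'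
    have hmP : (m : A) ∉ P := by
      intro hmem
      have hco : Nat.gcd p m = 1 := ((Nat.Prime.coprime_iff_not_dvd hp).mpr hmnd)
      have hg := Nat.gcd_eq_gcd_ab p m
      rw [hco] at hg
      have h1 : (1 : A) = (p:A) * (((Nat.gcdA p m) : ℤ) : A) + (m:A) * (((Nat.gcdB p m) : ℤ) : A) := by
        have := congrArg (fun z : ℤ => ((z : ℤ) : A)) hg
        push_cast at this ⊢
        linear_combination this
      have hone : (1:A) ∈ P := by
        rw [h1]
        exact add_mem (P.mul_mem_right _ hpP) (P.mul_mem_right _ hmem)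
      exact hP.ne_top ((Ideal.eq_top_iff_one P).mpr hone)
    have hPprime : Prime P := Ideal.prime_of_isPrime hPbot hP
    have hdvd1 : P ^ n ∣ Ideal.span {(k : A)} :=
      Ideal.dvd_iff_le.mpr ((Ideal.span_singleton_le_iff_mem _).mpr hk)
    have hspan : Ideal.span {(k:A)} = Ideal.span {(p:A)} ^ a * Ideal.span {(m:A)} := by
      rw [Ideal.span_singleton_pow, Ideal.span_singleton_mul_span_singleton]
      have heq : (p:A)^a * (m:A) = (k:A) := by
        rw [← hkeq]; push_cast; ring
      rw [heq]
    rw [hspan] at hdvd1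
    have hnd : ¬ P ∣ Ideal.span {(m : A)} := fun hdd =>
      hmP (Ideal.dvd_iff_le.mp hdd (Ideal.subset_span rfl))
    have hdvd2 : P ^ n ∣ Ideal.span {(p:A)} ^ a :=
      hPprime.pow_dvd_of_dvd_mul_right n hnd hdvd1
    rw [hsplit, mul_pow] at hdvd2
    have hndPbar : ¬ P ∣ Pbar ^ a := by
      intro hdd
      have hdp : P ∣ Pbar := hPprime.dvd_of_dvd_pow hdd
      have hle : Pbar ≤ P := Ideal.dvd_iff_le.mp hdp
      exact hne ((hPbar.isMaximal hPbarbot).eq_of_le hP.ne_top hle).symm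
    have hdvd3 : P ^ n ∣ P ^ a := hPprime.pow_dvd_of_dvd_mul_right n hndPbar hdvd2
    have hna : n ≤ a := (pow_dvd_pow_iff hPprime.ne_zero hPprime.not_unit).mp hdvd3
    exact dvd_trans (pow_dvd_pow p hna) (Nat.ordProj_dvd k p)
  · rintro ⟨c, rfl⟩
    push_cast
    exact Ideal.mul_mem_right _ _ (Ideal.pow_mem_pow hpP n)

private lemma quot_pow_ringEquiv {A : Type*} [CommRing A] [IsDedekindDomain A]
    [Module.Free ℤ A] [Module.Finite ℤ A]
    {p : ℕ} (hp : p.Prime) {P Pbar : Ideal A} (hP : P.IsPrime) (hPbar : Pbar.IsPrime)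
    (hne : P ≠ Pbar) (hPbot : P ≠ ⊥) (hPbarbot : Pbar ≠ ⊥)
    (hsplit : Ideal.span {(p : A)} = P * Pbar) (habs : Ideal.absNorm P = p) (n : ℕ) :
    Nonempty (ZMod (p^n) ≃+* A ⧸ P^n) := by
  haveI : CharP (A ⧸ P^n) (p^n) := ⟨fun k => by
    rw [← map_natCast (Ideal.Quotient.mk (P^n)), Ideal.Quotient.eq_zero_iff_mem,
      key_mem_pow hp hP hPbar hne hPbot hPbarbot hsplit n k]⟩
  have hcard : Nat.card (A ⧸ P^n) = p^n := by
    rw [← Submodule.cardQuot_apply, ← Ideal.absNorm_apply, map_pow, habs]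
  haveI : Finite (A ⧸ P^n) := Nat.finite_of_card_ne_zero (by
    rw [hcard]; exact pow_ne_zero _ hp.pos.ne')
  haveI : Fintype (A ⧸ P^n) := Fintype.ofFinite _
  have hcard2 : Fintype.card (A ⧸ P^n) = p^n := by rw [← Nat.card_eq_fintype_card, hcard]
  exact ⟨RingEquiv.ofBijective _ (ZMod.castHom_bijective (A ⧸ P^n) hcard2)⟩


private lemma absNorm_span_p (K : Type*) [Field K] [NumberField K]
    (hdeg : Module.finrank ℚ K = 2) (p : ℕ) :
    Ideal.absNorm (Ideal.span {(p : 𝓞 K)}) = p ^ 2 := by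
  have h1 : (p : 𝓞 K) = algebraMap ℤ (𝓞 K) (p : ℤ) := by simp
  rw [Ideal.absNorm_span_singleton, h1,
    Algebra.norm_algebraMap_of_basis (Module.Free.chooseBasis ℤ (𝓞 K))]
  have hcard : Fintype.card (Module.Free.ChooseBasisIndex ℤ (𝓞 K)) = 2 := by
    rw [← Module.finrank_eq_card_chooseBasisIndex, NumberField.RingOfIntegers.rank, hdeg]
  rw [hcard]
  simp [Int.natAbs_pow]

private lemma absNorm_both (K : Type*) [Field K] [NumberField K]
    (hdeg : Module.finrank ℚ K = 2) (p : ℕ) (hp : p.Prime)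
    (P Pbar : Ideal (𝓞 K)) (hP : P.IsPrime) (hPbar : Pbar.IsPrime)
    (hsplit : Ideal.span {(p : 𝓞 K)} = P * Pbar) :
    Ideal.absNorm P = p := by
  have h2 : Ideal.absNorm P * Ideal.absNorm Pbar = p^2 := by
    have := absNorm_span_p K hdeg p
    rw [hsplit] at this
    rw [← this]
    exact (MonoidWithZeroHom.map_mul (Ideal.absNorm (S := 𝓞 K)) P Pbar).symm
  have hPne : Ideal.absNorm P ≠ 1 := fun h => hP.ne_top (Ideal.absNorm_eq_one_iff.mp h)
  have hPbarne : Ideal.absNorm Pbar ≠ 1 := fun h => hPbar.ne_top (Ideal.absNorm_eq_one_iff.mp h)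
  have hdP : Ideal.absNorm P ∣ p^2 := ⟨_, h2.symm⟩
  obtain ⟨i, hi, hieq⟩ := (Nat.dvd_prime_pow hp).mp hdP
  interval_cases i
  · rw [pow_zero] at hieq; exact absurd hieq hPne
  · simpa using hieq
  · exfalso
    rw [hieq] at h2
    have hp2 : (p:ℕ)^2 ≠ 0 := pow_ne_zero _ hp.pos.ne'
    have : Ideal.absNorm Pbar = 1 := by
      have := Nat.eq_of_mul_eq_mul_left (Nat.pos_of_ne_zero hp2) (h2.trans (mul_one _).symm)
      exact this
    exact hPbarne this


set_option maxHeartbeats 1000000 in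
set_option synthInstance.maxHeartbeats 200000 in
/-- Let `K` be an imaginary quadratic field, `p` an odd rational prime that is split in
`K` (i.e. `p 𝓞 K = 𝔭 · 𝔭̄` for distinct prime ideals `𝔭`, `𝔭̄`), and `n ≥ 2`. Then the
number of characters of `(𝓞 K / p^n 𝓞 K)ˣ` that are trivial on rational integers and
nontrivial on the kernel of the natural reduction map
`(𝓞 K / p^n 𝓞 K)ˣ → (𝓞 K / p^(n−1) 𝓞 K)ˣ` equals `p^(n−2) (p − 1)²`.
(A unit `u` lies in that kernel exactly when some (equivalently, any) lift `x ∈ 𝓞 K` of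
`u` reduces to `1` modulo `p^(n−1) 𝓞 K`.) -/
theorem card_characters_trivial_on_Int_primitive_split
    (K : Type*) [Field K] [NumberField K]
    (hdeg : Module.finrank ℚ K = 2) (himag : IsEmpty (K →+* ℝ))
    (p : ℕ) (hp : p.Prime) (hp2 : p ≠ 2)
    (P Pbar : Ideal (𝓞 K)) (hP : P.IsPrime) (hPbar : Pbar.IsPrime) (hne : P ≠ Pbar)
    (hsplit : Ideal.span {(p : 𝓞 K)} = P * Pbar)
    (n : ℕ) (hn : 2 ≤ n) :
    Nat.card {χ : (𝓞 K ⧸ Ideal.span {(p : 𝓞 K) ^ n})ˣ →* ℂˣ //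
      (∀ u : (𝓞 K ⧸ Ideal.span {(p : 𝓞 K) ^ n})ˣ,
        (∃ m : ℤ, (u : 𝓞 K ⧸ Ideal.span {(p : 𝓞 K) ^ n}) =
          Ideal.Quotient.mk (Ideal.span {(p : 𝓞 K) ^ n}) (m : 𝓞 K)) →
        χ u = 1) ∧
      ∃ (u : (𝓞 K ⧸ Ideal.span {(p : 𝓞 K) ^ n})ˣ) (x : 𝓞 K),
        Ideal.Quotient.mk (Ideal.span {(p : 𝓞 K) ^ n}) x =
          (u : 𝓞 K ⧸ Ideal.span {(p : 𝓞 K) ^ n}) ∧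
        Ideal.Quotient.mk (Ideal.span {(p : 𝓞 K) ^ (n - 1)}) x = 1 ∧
        χ u ≠ 1} = p ^ (n - 2) * (p - 1) ^ 2 := by
  
  classical
  haveI : NeZero (p ^ n) := ⟨pow_ne_zero _ hp.pos.ne'⟩
  have hpA : (p : 𝓞 K) ≠ 0 := Nat.cast_ne_zero.mpr hp.pos.ne'
  have hPbot : P ≠ ⊥ := by
    intro h; rw [h] at hsplit
    simp only [Submodule.bot_mul] at hsplit
    exact hpA (Ideal.span_singleton_eq_bot.mp hsplit)
  have hPbarbot : Pbar ≠ ⊥ := by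
    intro h; rw [h] at hsplit
    simp only [Submodule.mul_bot] at hsplit
    exact hpA (Ideal.span_singleton_eq_bot.mp hsplit)
  have habsP : Ideal.absNorm P = p := absNorm_both K hdeg p hp P Pbar hP hPbar hsplit
  have habsPbar : Ideal.absNorm Pbar = p :=
    absNorm_both K hdeg p hp Pbar P hPbar hP (by rwa [mul_comm])
  obtain ⟨e₁⟩ := quot_pow_ringEquiv hp hP hPbar hne hPbot hPbarbot hsplit habsP n
  obtain ⟨e₂⟩ := quot_pow_ringEquiv hp hPbar hP hne.symm hPbarbot hPbot
    (by rwa [mul_comm]) habsPbar n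
  have hcop : IsCoprime (P^n) (Pbar^n) := by
    apply IsCoprime.pow
    rw [Ideal.isCoprime_iff_sup_eq]
    exact Ideal.IsMaximal.coprime_of_ne (hP.isMaximal hPbot) (hPbar.isMaximal hPbarbot) hne
  have hspan_eq : Ideal.span {(p : 𝓞 K)^n} = P^n * Pbar^n := by
    rw [← Ideal.span_singleton_pow, hsplit, mul_pow]
  let R := 𝓞 K ⧸ Ideal.span {(p : 𝓞 K) ^ n}
  let e : R ≃+* ZMod (p^n) × ZMod (p^n) :=
    (Ideal.quotEquivOfEq hspan_eq).trans
      ((Ideal.quotientMulEquivQuotientProd _ _ hcop).trans (RingEquiv.prodCongr e₁.symm e₂.symm))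
  let U := (ZMod (p^n))ˣ
  let F : Rˣ ≃* U × U := (Units.mapEquiv e.toMulEquiv).trans MulEquiv.prodUnits
  have h1 : ∀ u : Rˣ, (((F u).1 : U) : ZMod (p^n)) = (e (u : R)).1 := by
    intro u; simp [F, MulEquiv.prodUnits, e]
  have h2 : ∀ u : Rˣ, (((F u).2 : U) : ZMod (p^n)) = (e (u : R)).2 := by
    intro u; simp [F, MulEquiv.prodUnits, e]
  set mkn := Ideal.Quotient.mk (Ideal.span {(p : 𝓞 K) ^ n}) with hmkn
  set mkn1 := Ideal.Quotient.mk (Ideal.span {(p : 𝓞 K) ^ (n-1)}) with hmkn1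
  set q : ZMod (p^n) := ((p^(n-1) : ℕ) : ZMod (p^n)) with hq
  -- dvd transfer through e
  have iso_dvd : ∀ c y : R, c ∣ y ↔ e c ∣ e y := by
    intro c y
    constructor
    · exact fun h => map_dvd e h
    · intro h
      have := map_dvd e.symm h
      simpa using this
  have prod_dvd : ∀ y₁ y₂ : ZMod (p^n),
      ((q, q) : ZMod (p^n) × ZMod (p^n)) ∣ (y₁, y₂) ↔ q ∣ y₁ ∧ q ∣ y₂ := by
    intro y₁ y₂
    constructor
    · rintro ⟨⟨c₁, c₂⟩, hc⟩
      rw [Prod.ext_iff] at hc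
      exact ⟨⟨c₁, hc.1⟩, ⟨c₂, hc.2⟩⟩
    · rintro ⟨⟨c₁, hc₁⟩, ⟨c₂, hc₂⟩⟩
      exact ⟨(c₁, c₂), Prod.ext hc₁ hc₂⟩
  have heq : e (mkn ((p : 𝓞 K)^(n-1))) = ((q, q) : ZMod (p^n) × ZMod (p^n)) := by
    have hcast : ((p : 𝓞 K)^(n-1)) = ((p^(n-1) : ℕ) : 𝓞 K) := by push_cast; ring
    rw [hcast, map_natCast mkn, map_natCast e, hq]
    exact Prod.ext (Prod.fst_natCast _) (Prod.snd_natCast _)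
  -- bridge for condition 1
  have bridge1 : ∀ u : Rˣ,
      (∃ m : ℤ, (u : R) = mkn ((m : ℤ) : 𝓞 K)) ↔ (F u).1 = (F u).2 := by
    intro u
    constructor
    · rintro ⟨m, hm⟩
      have he : e (u : R) = (((m : ℤ) : ZMod (p^n)), ((m : ℤ) : ZMod (p^n))) := by
        rw [hm, map_intCast mkn, map_intCast e]
        exact Prod.ext (Prod.fst_intCast m) (Prod.snd_intCast m)
      rw [Units.ext_iff, h1 u, h2 u, he]
    · intro hw
      have hcoe : (e (u : R)).1 = (e (u : R)).2 := by
        rw [← h1 u, ← h2 u, hw]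
      obtain ⟨k, hk⟩ : ∃ k : ℕ, (k : ZMod (p^n)) = (e (u : R)).1 :=
        ⟨_, ZMod.natCast_rightInverse _⟩
      refine ⟨(k : ℤ), ?_⟩
      apply e.injective
      rw [map_intCast mkn, map_intCast e]
      refine Prod.ext ?_ ?_
      · rw [Prod.fst_intCast, Int.cast_natCast, hk]
      · rw [Prod.snd_intCast, Int.cast_natCast, hk, hcoe]
  -- bridge for condition 2
  have hle : Ideal.span {(p : 𝓞 K)^n} ≤ Ideal.span {(p : 𝓞 K)^(n-1)} :=
    Ideal.span_singleton_le_span_singleton.mpr (pow_dvd_pow _ (Nat.sub_le n 1))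
  have subbridge : ∀ x : 𝓞 K, mkn1 x = 1 ↔ mkn ((p : 𝓞 K)^(n-1)) ∣ mkn x - 1 := by
    intro x
    rw [show (1 : 𝓞 K ⧸ Ideal.span {(p : 𝓞 K)^(n-1)}) = mkn1 1 from (map_one mkn1).symm,
      hmkn1, Ideal.Quotient.mk_eq_mk_iff_sub_mem,
      ← Ideal.mem_quotient_iff_mem hle, hmkn]
    rw [map_sub, map_one]
    rw [Ideal.map_span, Set.image_singleton, Ideal.mem_span_singleton]
  have bridge2 : ∀ u : Rˣ,
      (∃ x : 𝓞 K, mkn x = (u : R) ∧ mkn1 x = 1) ↔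
      (q ∣ ((F u).1 : ZMod (p^n)) - 1 ∧ q ∣ ((F u).2 : ZMod (p^n)) - 1) := by
    intro u
    have main : ∀ x : 𝓞 K, mkn x = (u : R) →
        (mkn1 x = 1 ↔ (q ∣ ((F u).1 : ZMod (p^n)) - 1 ∧ q ∣ ((F u).2 : ZMod (p^n)) - 1)) := by
      intro x hx
      rw [subbridge x, hx, iso_dvd, heq, map_sub, map_one]
      rw [show e (u : R) = ((e (u:R)).1, (e (u:R)).2) from rfl]
      rw [show (((e (u:R)).1, (e (u:R)).2) - (1 : ZMod (p^n) × ZMod (p^n)))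
          = ((e (u:R)).1 - 1, (e (u:R)).2 - 1) from rfl]
      rw [prod_dvd, h1 u, h2 u]
    constructor
    · rintro ⟨x, hx, hx1⟩
      exact (main x hx).mp hx1
    · intro hdv
      obtain ⟨x, hx⟩ := Ideal.Quotient.mk_surjective (I := Ideal.span {(p : 𝓞 K) ^ n}) (u : R)
      exact ⟨x, hx, (main x hx).mpr hdv⟩
  -- the equivalence of character subtypes
  let Φ : (Rˣ →* ℂˣ) ≃ ((U × U) →* ℂˣ) :=
    { toFun := fun χ => χ.comp F.symm.toMonoidHom
      invFun := fun ψ => ψ.comp F.toMonoidHom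
      left_inv := fun χ => by ext u; simp
      right_inv := fun ψ => by ext w; simp }
  have hΦ : ∀ (χ : Rˣ →* ℂˣ) (w : U × U), Φ χ w = χ (F.symm w) := fun χ w => rfl
  have hcond : ∀ χ : Rˣ →* ℂˣ,
      ((∀ u : Rˣ, (∃ m : ℤ, (u : R) = mkn ((m : ℤ) : 𝓞 K)) → χ u = 1) ∧
        ∃ (u : Rˣ) (x : 𝓞 K), mkn x = (u : R) ∧ mkn1 x = 1 ∧ χ u ≠ 1) ↔
      ((∀ w : U × U, w.1 = w.2 → (Φ χ) w = 1) ∧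
        ∃ w : U × U, ((q ∣ ((w.1 : U) : ZMod (p^n)) - 1 ∧ q ∣ ((w.2 : U) : ZMod (p^n)) - 1)
          ∧ (Φ χ) w ≠ 1)) := by
    intro χ
    constructor
    · rintro ⟨hA, u, x, hx, hx1, hχu⟩
      constructor
      · intro w hw
        rw [hΦ]
        apply hA
        rw [bridge1, F.apply_symm_apply]
        exact hw
      · refine ⟨F u, ?_, ?_⟩
        · rw [← bridge2 u]
          exact ⟨x, hx, hx1⟩
        · rw [hΦ, F.symm_apply_apply]
          exact hχu
    · rintro ⟨hA, w, hw, hχw⟩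
      constructor
      · intro u hu
        have : χ u = Φ χ (F u) := by rw [hΦ, F.symm_apply_apply]
        rw [this]
        apply hA
        rw [← bridge1]
        exact hu
      · refine ⟨F.symm w, ?_⟩
        have hb := (bridge2 (F.symm w)).mpr (by rwa [F.apply_symm_apply])
        obtain ⟨x, hx, hx1⟩ := hb
        exact ⟨x, hx, hx1, by rwa [← hΦ]⟩
  have hzc := zmod_count p n hp hn
  rw [← hzc]
  exact Nat.card_congr (Equiv.subtypeEquiv Φ hcond)
end
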